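/- arXiv:1906.07522 — 7 statements merged into one kernel-verified Lean document; each statement's English description precedes it below -/
import Mathlib

section
/- Let λ > 0 with λ ≠ 1. There is no holomorphic function f from the upper half-plane ℍ = {z ∈ ℂ : Im z > 0} into itself such that f(z + 2π) = λ·f(z) for all z ∈ ℍ. -/
open Complex Metric Set

/-- Möbius map sending the upper half-plane to the unit disk, `a ↦ 0`. -/
noncomputable def psiM (a z : ℂ) : ℂ := (z - a) / (z - (starRingEnd ℂ) a)

/-- Inverse Möbius map, disk to upper half-plane, `0 ↦ a`. -/
noncomputable def phiM (a u : ℂ) : ℂ := (a - u * (starRingEnd ℂ) a) / (1 - u)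

lemma sub_conj_ne_aux {a z : ℂ} (ha : 0 < a.im) (hz : 0 < z.im) :
    z - (starRingEnd ℂ) a ≠ 0 := by
  intro h
  have : (z - (starRingEnd ℂ) a).im = 0 := by rw [h]; simp
  simp [Complex.sub_im, Complex.conj_im] at this
  linarith

lemma psi_abs_lt {a z : ℂ} (ha : 0 < a.im) (hz : 0 < z.im) :
    ‖psiM a z‖ < 1 := by
  have hne := sub_conj_ne_aux ha hz
  have hpos : 0 < ‖z - (starRingEnd ℂ) a‖ := by
    simpa [norm_pos_iff] using hne
  rw [psiM, norm_div, div_lt_one hpos]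
  rw [Complex.norm_def, Complex.norm_def]
  apply Real.sqrt_lt_sqrt (Complex.normSq_nonneg _)
  simp only [Complex.normSq_apply, Complex.sub_re, Complex.sub_im, Complex.conj_re,
    Complex.conj_im]
  nlinarith

lemma phi_im_pos {a u : ℂ} (ha : 0 < a.im) (hu : ‖u‖ < 1) :
    0 < (phiM a u).im := by
  have hns : u.re ^ 2 + u.im ^ 2 < 1 := by
    have := Complex.sq_norm u
    nlinarith [Complex.normSq_apply u, norm_nonneg u]
  have h1u : (1 : ℂ) - u ≠ 0 := by
    intro h
    have : u = 1 := by linear_combination -h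
    simp [this] at hu
  have hden : 0 < Complex.normSq (1 - u) := Complex.normSq_pos.2 h1u
  rw [phiM, Complex.div_im, ← sub_div]
  apply div_pos _ hden
  simp only [Complex.sub_re, Complex.sub_im, Complex.mul_re, Complex.mul_im,
    Complex.conj_re, Complex.conj_im, Complex.one_re, Complex.one_im]
  nlinarith

/-- There is no holomorphic self-map `f` of the upper half-plane with `f(z + 2π) = λ f(z)`
for `λ > 0`, `λ ≠ 1`: the monodromy of a developing map cannot be hyperbolic. -/
theorem no_hyperbolic_monodromy (lam : ℝ) (hlam : 0 < lam) (hne : lam ≠ 1) :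
    ¬ ∃ f : ℂ → ℂ,
      DifferentiableOn ℂ f {z : ℂ | 0 < z.im} ∧
      (∀ z : ℂ, 0 < z.im → 0 < (f z).im) ∧
      (∀ z : ℂ, 0 < z.im → f (z + 2 * Real.pi) = (lam : ℂ) * f z) := by
  rintro ⟨f, hdf, hmap, hper⟩
  have hl1 : 0 < |lam - 1| := abs_pos.2 (sub_ne_zero.2 hne)
  have hpi : (0:ℝ) < Real.pi := Real.pi_pos
  set y : ℝ := Real.pi * (lam + 1) / |lam - 1| + 1 with hy_def
  have hy0 : 0 < y := by positivity
  set c : ℂ := y * Complex.I with hc_def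
  have hcim : c.im = y := by simp [hc_def]
  have hc : 0 < c.im := by rw [hcim]; exact hy0
  set w : ℂ := f c with hw_def
  have hw : 0 < w.im := hmap c hc
  set z₁ : ℂ := c + 2 * Real.pi with hz1_def
  have hz1im : z₁.im = y := by simp [hz1_def, hcim]
  have hz1 : 0 < z₁.im := by rw [hz1im]; exact hy0
  have h1 : z₁ - (starRingEnd ℂ) c ≠ 0 := sub_conj_ne_aux hc hz1
  set u : ℂ := psiM c z₁ with hu_def
  -- `1 - u` and `φ c u = z₁`
  have h1u : (1:ℂ) - u = (c - (starRingEnd ℂ) c) / (z₁ - (starRingEnd ℂ) c) := by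
    rw [hu_def, psiM]
    field_simp
    ring
  have hcc : c - (starRingEnd ℂ) c ≠ 0 := by
    intro h
    have : (c - (starRingEnd ℂ) c).im = 0 := by rw [h]; simp
    simp [Complex.sub_im, Complex.conj_im] at this
    linarith
  have h1u' : (1:ℂ) - u ≠ 0 := h1u ▸ div_ne_zero hcc h1
  have hphi : phiM c u = z₁ := by
    rw [phiM, h1u, hu_def, psiM]
    field_simp
    ring
  -- bound on `abs u`
  have habs_u : ‖u‖ ≤ Real.pi / y := by
    have hnum : z₁ - c = (2 * Real.pi : ℝ) := by
      rw [hz1_def]; push_cast; ring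
    have himlb : 2 * y ≤ ‖z₁ - (starRingEnd ℂ) c‖ := by
      have : (z₁ - (starRingEnd ℂ) c).im = 2 * y := by
        simp [Complex.sub_im, Complex.conj_im, hz1im, hcim]; ring
      calc 2 * y = |(z₁ - (starRingEnd ℂ) c).im| := by
            rw [this]; rw [abs_of_pos (by positivity)]
        _ ≤ _ := Complex.abs_im_le_norm _
    rw [hu_def, psiM, norm_div, hnum]
    have h2y : (0:ℝ) < 2 * y := by positivity
    calc ‖((2 * Real.pi : ℝ) : ℂ)‖ / ‖z₁ - (starRingEnd ℂ) c‖
        ≤ (2 * Real.pi) / (2 * y) := by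
          apply div_le_div₀ (by positivity) _ h2y himlb
          rw [Complex.norm_real, Real.norm_eq_abs, abs_of_pos (by positivity)]
      _ = Real.pi / y := by field_simp
  have hu1 : ‖u‖ < 1 := by
    have hylarge : Real.pi < y := by
      rw [hy_def]
      have h1 : |lam - 1| < lam + 1 := by
        rw [abs_lt]; constructor <;> linarith
      have : Real.pi ≤ Real.pi * (lam + 1) / |lam - 1| := by
        rw [le_div_iff₀ hl1]
        nlinarith
      linarith
    have : Real.pi / y < 1 := by
      rw [div_lt_one hy0]; exact hylarge
    linarith [habs_u]
  -- the disk self-map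
  set G : ℂ → ℂ := fun v => psiM w (f (phiM c v)) with hG_def
  have hφmap : ∀ v ∈ ball (0:ℂ) 1, 0 < (phiM c v).im := by
    intro v hv
    rw [mem_ball_zero_iff] at hv
    exact phi_im_pos hc hv
  have hφd : DifferentiableOn ℂ (phiM c) (ball 0 1) := by
    apply DifferentiableOn.div
    · exact (differentiableOn_const _).sub
        ((differentiableOn_id).mul (differentiableOn_const _))
    · exact (differentiableOn_const _).sub differentiableOn_id
    · intro v hv
      rw [mem_ball_zero_iff] at hv
      intro h
      have : v = 1 := by linear_combination -h
      simp [this] at hv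
  have hF : DifferentiableOn ℂ (fun v => f (phiM c v)) (ball 0 1) :=
    hdf.comp hφd (fun v hv => hφmap v hv)
  have hGd : DifferentiableOn ℂ G (ball 0 1) := by
    apply DifferentiableOn.div
    · exact hF.sub (differentiableOn_const _)
    · exact hF.sub (differentiableOn_const _)
    · intro v hv
      exact sub_conj_ne_aux hw (hmap _ (hφmap v hv))
  have hG0 : G 0 = 0 := by
    have hphi0 : phiM c 0 = c := by simp [phiM]
    simp [hG_def, hphi0, ← hw_def, psiM]
  have hGmap : MapsTo G (ball 0 1) (ball (G 0) 1) := by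
    rw [hG0]
    intro v hv
    rw [mem_ball_zero_iff]
    exact psi_abs_lt hw (hmap _ (hφmap v hv))
  have hGmap' : MapsTo G (ball 0 1) (ball 0 1) := by rwa [hG0] at hGmap
  have hschwarz : ‖G u‖ ≤ ‖u‖ :=
    Complex.norm_le_norm_of_mapsTo_ball hGd (hGmap'.mono_right ball_subset_closedBall) hG0 hu1
  -- compute `G u`
  have hGu : G u = psiM w ((lam : ℂ) * w) := by
    rw [hG_def]
    simp only
    rw [hphi, hz1_def]
    rw [hper c hc, ← hw_def]
  -- lower bound on `abs (G u)`
  have hlamw : ‖(lam:ℂ) * w - (starRingEnd ℂ) w‖ ≤ (lam + 1) * ‖w‖ := by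
    calc ‖(lam:ℂ) * w - (starRingEnd ℂ) w‖
        ≤ ‖(lam:ℂ) * w‖ + ‖(starRingEnd ℂ) w‖ :=
          norm_sub_le _ _
      _ = lam * ‖w‖ + ‖w‖ := by
          rw [norm_mul, Complex.norm_real, Real.norm_eq_abs, abs_of_pos hlam, Complex.norm_conj]
      _ = (lam + 1) * ‖w‖ := by ring
  have hwne : ‖w‖ ≠ 0 := by
    intro h
    have : w = 0 := by simpa using h
    rw [this] at hw; simp at hw
  have hwpos : 0 < ‖w‖ := lt_of_le_of_ne (norm_nonneg w) (Ne.symm hwne)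
  have hdenpos : 0 < ‖(lam:ℂ) * w - (starRingEnd ℂ) w‖ := by
    have hlw : 0 < ((lam:ℂ) * w).im := by
      simp only [Complex.mul_im, Complex.ofReal_re, Complex.ofReal_im]
      nlinarith
    simpa [norm_pos_iff] using sub_conj_ne_aux hw hlw
  have hlb : |lam - 1| / (lam + 1) ≤ ‖psiM w ((lam:ℂ) * w)‖ := by
    rw [psiM, norm_div]
    have hnum : ‖(lam:ℂ) * w - w‖ = |lam - 1| * ‖w‖ := by
      have : (lam:ℂ) * w - w = ((lam - 1 : ℝ) : ℂ) * w := by push_cast; ring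
      rw [this, norm_mul, Complex.norm_real, Real.norm_eq_abs]
    rw [hnum]
    rw [div_le_div_iff₀ (by positivity) hdenpos]
    calc |lam - 1| * ‖(lam:ℂ) * w - (starRingEnd ℂ) w‖
        ≤ |lam - 1| * ((lam + 1) * ‖w‖) := by
          exact mul_le_mul_of_nonneg_left hlamw (abs_nonneg _)
      _ = |lam - 1| * ‖w‖ * (lam + 1) := by ring
  -- contradiction
  have hfin : |lam - 1| / (lam + 1) ≤ Real.pi / y := by
    calc |lam - 1| / (lam + 1) ≤ ‖psiM w ((lam:ℂ) * w)‖ := hlb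
      _ = ‖G u‖ := by rw [hGu]
      _ ≤ ‖u‖ := hschwarz
      _ ≤ Real.pi / y := habs_u
  have hcontra : Real.pi / y < |lam - 1| / (lam + 1) := by
    rw [div_lt_div_iff₀ hy0 (by positivity)]
    rw [hy_def]
    have : Real.pi * (lam + 1) / |lam - 1| * |lam - 1| = Real.pi * (lam + 1) := by
      field_simp
    nlinarith [this, hl1]
  linarith
end

section
/- There is no holomorphic function G on the punctured unit disk 𝔻* = {w ∈ ℂ : 0 < |w| < 1} such that Im G(w) > −log|w| for all w ∈ 𝔻*. (Equivalently, Im G(w) − log(1/|w|) > 0 cannot hold throughout 𝔻*.) -/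
open Complex Metric Filter Set
open scoped Topology

/-- The punctured disk is a punctured neighborhood of `0`. -/
private lemma punct_mem : (ball (0:ℂ) 1 \ {0}) ∈ 𝓝[≠] (0:ℂ) :=
  diff_mem_nhdsWithin_compl (ball_mem_nhds _ one_pos) {0}

/-- Key construction: for each `n ≥ 1`, the function `exp (I * G w / n)` extends
holomorphically to the full disk with value `0` at `0`. -/
private lemma exists_extension (G : ℂ → ℂ)
    (hd : DifferentiableOn ℂ G (ball (0:ℂ) 1 \ {0}))
    (hb : ∀ w ∈ ball (0:ℂ) 1 \ {0}, -Real.log (‖w‖) < (G w).im)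
    (n : ℕ) (hn : 0 < n) :
    ∃ g : ℂ → ℂ, DifferentiableOn ℂ g (ball (0:ℂ) 1) ∧ g 0 = 0 ∧
      ∀ w ∈ ball (0:ℂ) 1 \ {0}, g w = Complex.exp (Complex.I * G w / n) := by
  set S : Set ℂ := ball (0:ℂ) 1 \ {0} with hS
  have hSopen : IsOpen S := isOpen_ball.sdiff isClosed_singleton
  set gn : ℂ → ℂ := fun w => Complex.exp (Complex.I * G w / n) with hgn
  have hdiff : DifferentiableOn ℂ gn S :=
    DifferentiableOn.cexp (((differentiableOn_const _).mul hd).div_const _)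
  have him : ∀ w ∈ S, 0 < (G w).im := by
    intro w hw
    refine lt_trans ?_ (hb w hw)
    have h0 : 0 < ‖w‖ := by
      simpa [norm_pos_iff] using hw.2
    have h1 : ‖w‖ < 1 := by
      simpa [mem_ball_zero_iff] using hw.1
    have := Real.log_neg h0 h1
    linarith
  have hnorm : ∀ w ∈ S, ‖gn w‖ = Real.exp (-(G w).im / n) := by
    intro w hw
    have hre : (Complex.I * G w / n).re = -(G w).im / n := by
      rw [show ((n : ℂ)) = ((n : ℝ) : ℂ) by push_cast; ring, Complex.div_ofReal_re]
      simp [Complex.mul_re]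
    simp [hgn, Complex.norm_exp, hre]
  have hle1 : ∀ w ∈ S, ‖gn w‖ ≤ 1 := by
    intro w hw
    rw [hnorm w hw]
    apply Real.exp_le_one_iff.mpr
    have h1 := him w hw
    have hn' : (0:ℝ) ≤ n := by positivity
    exact div_nonpos_of_nonpos_of_nonneg (by linarith) hn'
  -- `gn ^ n = exp (I * G)` on `S`
  have hpow : ∀ w ∈ S, gn w ^ n = Complex.exp (Complex.I * G w) := by
    intro w hw
    rw [hgn, ← Complex.exp_nat_mul]
    congr 1
    have : (n : ℂ) ≠ 0 := Nat.cast_ne_zero.mpr hn.ne'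
    field_simp
  -- `‖gn w ^ n‖ ≤ |w|` on `S`
  have hpowle : ∀ w ∈ S, ‖gn w ^ n‖ ≤ ‖w‖ := by
    intro w hw
    rw [hpow w hw]
    have h0 : 0 < ‖w‖ := by
      simpa [norm_pos_iff] using hw.2
    have hre : (Complex.I * G w).re = -(G w).im := by simp [Complex.mul_re]
    rw [Complex.norm_exp, hre]
    calc Real.exp (-(G w).im) ≤ Real.exp (Real.log ‖w‖) :=
          Real.exp_le_exp.mpr (by linarith [hb w hw])
      _ = ‖w‖ := Real.exp_log h0
  -- boundedness
  have hbdd : BddAbove (norm ∘ gn '' S) := by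
    refine ⟨1, ?_⟩
    rintro x ⟨w, hw, rfl⟩
    exact hle1 w hw
  -- the tendsto statement from removable singularity theory
  have hev : ∀ᶠ z in 𝓝[≠] (0:ℂ), DifferentiableAt ℂ gn z := by
    filter_upwards [punct_mem] with z hz
    exact hdiff.differentiableAt (hSopen.mem_nhds hz)
  have hbu : IsBoundedUnder (· ≤ ·) (𝓝[≠] (0:ℂ)) fun z => ‖gn z - gn 0‖ := by
    refine ⟨1 + ‖gn 0‖, eventually_map.2 ?_⟩
    filter_upwards [punct_mem] with z hz
    calc ‖gn z - gn 0‖ ≤ ‖gn z‖ + ‖gn 0‖ := norm_sub_le _ _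
      _ ≤ 1 + ‖gn 0‖ := by linarith [hle1 z hz]
  have htend : Tendsto gn (𝓝[≠] (0:ℂ)) (𝓝 (limUnder (𝓝[≠] (0:ℂ)) gn)) :=
    Complex.tendsto_limUnder_of_differentiable_on_punctured_nhds_of_bounded_under hev hbu
  -- the limit is zero
  have habs : Tendsto (fun w : ℂ => ‖w‖) (𝓝[≠] (0:ℂ)) (𝓝 0) := by
    have := (continuous_norm.tendsto (0:ℂ)).mono_left
      (nhdsWithin_le_nhds (s := {(0:ℂ)}ᶜ))
    simpa using this
  have htf : Tendsto (fun w => gn w ^ n) (𝓝[≠] (0:ℂ)) (𝓝 0) := by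
    apply squeeze_zero_norm' _ habs
    filter_upwards [punct_mem] with w hw
    exact hpowle w hw
  have hLn : (limUnder (𝓝[≠] (0:ℂ)) gn) ^ n = 0 :=
    tendsto_nhds_unique (htend.pow n) htf
  have hL0 : limUnder (𝓝[≠] (0:ℂ)) gn = 0 :=
    pow_eq_zero_iff hn.ne' |>.mp hLn
  refine ⟨Function.update gn 0 (limUnder (𝓝[≠] (0:ℂ)) gn), ?_, ?_, ?_⟩
  · exact Complex.differentiableOn_update_limUnder_of_bddAbove
      (ball_mem_nhds _ one_pos) hdiff hbdd
  · rw [Function.update_self, hL0]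
  · intro w hw
    rw [Function.update_of_ne (by simpa using hw.2)]

/-- There is no holomorphic function `G` on the punctured unit disk with
`Im G(w) > -log |w|` throughout the punctured disk. -/
theorem no_holomorphic_im_gt_neg_log :
    ¬ ∃ G : ℂ → ℂ,
      DifferentiableOn ℂ G {w : ℂ | 0 < ‖w‖ ∧ ‖w‖ < 1} ∧
      ∀ w : ℂ, 0 < ‖w‖ → ‖w‖ < 1 →
        -Real.log (‖w‖) < (G w).im := by
  rintro ⟨G, hGd, hGb⟩
  have hset : {w : ℂ | 0 < ‖w‖ ∧ ‖w‖ < 1} = ball (0:ℂ) 1 \ {0} := by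
    ext w
    simp only [mem_setOf_eq, mem_diff, mem_ball_zero_iff, mem_singleton_iff,
      ← norm_pos_iff]
    tauto
  have hd : DifferentiableOn ℂ G (ball (0:ℂ) 1 \ {0}) := hset ▸ hGd
  have hb : ∀ w ∈ ball (0:ℂ) 1 \ {0}, -Real.log (‖w‖) < (G w).im := by
    intro w hw
    exact hGb w (by simpa [norm_pos_iff] using hw.2)
      (by simpa [mem_ball_zero_iff] using hw.1)
  -- a function agreeing with an exponential on the punctured disk is not eventually zero
  have hnot_ev : ∀ (g : ℂ → ℂ) (c : ℂ), (∀ w ∈ ball (0:ℂ) 1 \ {0},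
      g w = Complex.exp (Complex.I * G w / c)) → ¬ (∀ᶠ z in 𝓝 (0:ℂ), g z = 0) := by
    intro g c hg hev
    obtain ⟨w, hw0, hwS⟩ :=
      ((hev.filter_mono nhdsWithin_le_nhds).and (eventually_of_mem punct_mem fun x hx => hx)).exists
    rw [hg w hwS] at hw0
    exact Complex.exp_ne_zero _ hw0
  obtain ⟨f, hfd, hf0, hfS⟩ := exists_extension G hd hb 1 one_pos
  have hfa : AnalyticAt ℂ f 0 := hfd.analyticAt (ball_mem_nhds _ one_pos)
  rcases eq_or_ne (analyticOrderAt f 0) ⊤ with htop | hfin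
  · exact hnot_ev f 1 (by exact_mod_cast hfS) (analyticOrderAt_eq_top.mp htop)
  obtain ⟨N, hN⟩ := WithTop.ne_top_iff_exists.mp hfin
  obtain ⟨g, hgd, hg0, hgS⟩ := exists_extension G hd hb (N + 1) (Nat.succ_pos N)
  have hga : AnalyticAt ℂ g 0 := hgd.analyticAt (ball_mem_nhds _ one_pos)
  rcases eq_or_ne (analyticOrderAt g 0) ⊤ with hgtop | hgfin
  · exact hnot_ev g (N + 1) (by exact_mod_cast hgS) (analyticOrderAt_eq_top.mp hgtop)
  obtain ⟨m, hm⟩ := WithTop.ne_top_iff_exists.mp hgfin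
  obtain ⟨h, hha, hh0, hhe⟩ := (hga.analyticOrderAt_eq_natCast (n := m)).mp hm.symm
  -- `f = g ^ (N+1)` near `0`
  have hfg : ∀ᶠ z in 𝓝 (0:ℂ), f z = g z ^ (N + 1) := by
    filter_upwards [ball_mem_nhds (0:ℂ) one_pos] with z hz
    rcases eq_or_ne z 0 with rfl | hz0
    · simp [hf0, hg0]
    · rw [hfS z ⟨hz, hz0⟩, hgS z ⟨hz, hz0⟩, ← Complex.exp_nat_mul]
      congr 1
      have : ((N:ℂ) + 1) ≠ 0 := by exact_mod_cast (Nat.cast_ne_zero (R := ℂ)).mpr (Nat.succ_ne_zero N)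
      push_cast
      field_simp
  -- hence the order of `f` is `(N+1) * m`
  have horder : analyticOrderAt f 0 = ((N + 1) * m : ℕ) := by
    rw [hfa.analyticOrderAt_eq_natCast]
    refine ⟨fun z => h z ^ (N + 1), hha.pow _, pow_ne_zero _ hh0, ?_⟩
    filter_upwards [hfg, hhe] with z h1 h2
    rw [h1, h2, smul_eq_mul, smul_eq_mul, mul_pow, ← pow_mul, mul_comm m (N + 1)]
  rw [← hN] at horder
  have hNm : N = (N + 1) * m := Nat.cast_inj.mp horder
  rcases Nat.eq_zero_or_pos m with rfl | hmpos
  · -- m = 0 would mean g 0 ≠ 0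
    have := hhe.self_of_nhds
    simp only [pow_zero, one_smul, sub_zero] at this
    rw [hg0] at this
    exact hh0 this.symm
  · have : N + 1 ≤ (N + 1) * m := Nat.le_mul_of_pos_right _ hmpos
    omega
end

section
/- There is no holomorphic function f from the upper half-plane ℍ = {z ∈ ℂ : Im z > 0} into itself such that f(z + 2π) = f(z) − 2π for all z ∈ ℍ. -/
open Complex Set MeasureTheory intervalIntegral

private lemma im_mem_halfplane {x y : ℝ} (hy : 0 < y) :
    (↑x + ↑y * Complex.I) ∈ {z : ℂ | 0 < z.im} := by
  simp [Complex.add_im, Complex.mul_im, hy]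

/-- There is no holomorphic self-map `f` of the upper half-plane with
`f(z + 2π) = f(z) - 2π`: parabolic monodromy with translation by `-2π` is impossible. -/
theorem no_parabolic_monodromy_neg :
    ¬ ∃ f : ℂ → ℂ,
      DifferentiableOn ℂ f {z : ℂ | 0 < z.im} ∧
      (∀ z : ℂ, 0 < z.im → 0 < (f z).im) ∧
      (∀ z : ℂ, 0 < z.im → f (z + 2 * Real.pi) = f z - 2 * Real.pi) := by
  rintro ⟨f, hdiff, hpos, hper⟩
  have hπ : (0:ℝ) < Real.pi := Real.pi_pos
  have hcont : ContinuousOn f {z : ℂ | 0 < z.im} := hdiff.continuousOn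
  -- horizontal slice integral
  set A : ℝ → ℂ := fun y => ∫ x in (0:ℝ)..(2*Real.pi), f (↑x + ↑y * Complex.I) with hA
  -- the slice map is continuous, hence interval integrable
  have hsliceC : ∀ y : ℝ, 0 < y →
      ContinuousOn (fun x : ℝ => f (↑x + ↑y * Complex.I)) (Set.uIcc (0:ℝ) (2*Real.pi)) := by
    intro y hy
    refine hcont.comp (Continuous.continuousOn (by continuity)) ?_
    intro x _
    exact im_mem_halfplane hy
  have hsliceInt : ∀ y : ℝ, 0 < y →
      IntervalIntegrable (fun x : ℝ => f (↑x + ↑y * Complex.I)) volume 0 (2*Real.pi) :=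
    fun y hy => (hsliceC y hy).intervalIntegrable
  -- the imaginary part of the slice integral is nonnegative
  have hAim : ∀ y : ℝ, 0 < y → 0 ≤ (A y).im := by
    intro y hy
    have : (A y).im = ∫ x in (0:ℝ)..(2*Real.pi), (f (↑x + ↑y * Complex.I)).im := by
      have := Complex.imCLM.intervalIntegral_comp_comm (hsliceInt y hy)
      simpa [hA] using this.symm
    rw [this]
    apply intervalIntegral.integral_nonneg (by positivity)
    intro x _
    exact (hpos _ (im_mem_halfplane hy)).le
  -- vertical slice map continuous
  have hvertC : ∀ a b : ℝ, 0 < a → 0 < b →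
      ContinuousOn (fun t : ℝ => f (↑t * Complex.I)) (Set.uIcc a b) := by
    intro a b ha hb
    refine hcont.comp (Continuous.continuousOn (by continuity)) ?_
    intro t ht
    have h1 : 0 < min a b := lt_min ha hb
    have ht0 : 0 < t := lt_of_lt_of_le h1 (by
      rw [Set.uIcc_eq_union] at ht
      rcases ht with h | h
      · exact le_trans (min_le_left a b) h.1
      · exact le_trans (min_le_right a b) h.1)
    simp [Complex.mul_im, ht0]
  -- main rectangle identity for y > 1
  have hrect : ∀ y : ℝ, 1 < y → (A y).im = (A 1).im - 2*Real.pi*(y-1) := by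
    intro y hy
    have hy0 : (0:ℝ) < y := lt_trans one_pos hy
    -- apply Cauchy–Goursat on the rectangle [0, 2π] × [1, y]
    have key := Complex.integral_boundary_rect_eq_zero_of_differentiableOn f
      Complex.I (↑(2*Real.pi) + ↑y * Complex.I) ?hd
    case hd =>
      apply hdiff.mono
      intro z hz
      rw [Complex.mem_reProdIm] at hz
      have h2 := hz.2
      simp only [Complex.I_im, Complex.add_im, Complex.ofReal_im, Complex.mul_im,
        Complex.ofReal_re, Complex.I_im, Complex.I_re, Complex.ofReal_im] at h2
      norm_num at h2
      rw [Set.uIcc_of_le hy.le] at h2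
      exact lt_of_lt_of_le one_pos h2.1
    simp only [Complex.I_re, Complex.I_im, Complex.add_re, Complex.ofReal_re, Complex.mul_re,
      Complex.ofReal_im, Complex.add_im, Complex.mul_im] at key
    norm_num at key
    -- rewrite the right vertical integral using the periodicity
    have hvert_eq : (∫ t in (1:ℝ)..y, f (2 * (Real.pi:ℂ) + ↑t * Complex.I))
        = (∫ t in (1:ℝ)..y, f (↑t * Complex.I)) - ((y:ℂ) - 1) * (2*Real.pi) := by
      have h1 : ∀ t ∈ Set.uIcc (1:ℝ) y, f (2 * (Real.pi:ℂ) + ↑t * Complex.I)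
          = f (↑t * Complex.I) - 2*Real.pi := by
        intro t ht
        rw [Set.uIcc_of_le hy.le] at ht
        have ht0 : 0 < t := lt_of_lt_of_le one_pos ht.1
        have := hper (↑t * Complex.I) (by simp [Complex.mul_im, ht0])
        rw [← this]
        ring_nf
      rw [intervalIntegral.integral_congr h1,
        intervalIntegral.integral_sub ((hvertC 1 y one_pos hy0).intervalIntegrable)
          intervalIntegrable_const,
        intervalIntegral.integral_const, Complex.real_smul]
      push_cast
      ring
    rw [hvert_eq] at key
    have hAy : A y = A 1 - Complex.I * ((2*Real.pi*(y-1) : ℝ) : ℂ) := by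
      have hP : A 1 = ∫ x in (0:ℝ)..(2*Real.pi), f (↑x + Complex.I) := by
        norm_num [hA]
      have hQ : A y = ∫ x in (0:ℝ)..(2*Real.pi), f (↑x + ↑y * Complex.I) := rfl
      rw [hP, hQ]
      push_cast
      linear_combination -key
    rw [hAy]
    simp [Complex.sub_im, Complex.mul_im]
  -- choose y large enough for a contradiction
  set y : ℝ := 1 + ((A 1).im + 1)/(2*Real.pi) with hy
  have hA1 : 0 ≤ (A 1).im := hAim 1 one_pos
  have hygt : 1 < y := by
    rw [hy]
    have : 0 < ((A 1).im + 1)/(2*Real.pi) := by positivity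
    linarith
  have h1 := hAim y (lt_trans one_pos hygt)
  have h2 := hrect y hygt
  rw [hy] at h2
  have h3 : 2*Real.pi*((1 + ((A 1).im + 1)/(2*Real.pi)) - 1) = (A 1).im + 1 := by
    field_simp
    ring
  rw [h3] at h2
  rw [hy] at h1
  linarith
end

section
/- Let h be a holomorphic function on the unit disk 𝔻 = {w ∈ ℂ : |w| < 1} with h(0) ≠ 0, and let m ≥ 1 be an integer. Then there exists w ∈ 𝔻 with w ≠ 0 such that Im(h(w)/w^m) ≤ 0. (Equivalently, it is impossible that Im(h(w)/w^m) > 0 for all w in the punctured disk.) -/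
/-- A function with a pole of order `m ≥ 1` at `0`, written `h(w)/w^m` with `h(0) ≠ 0`,
cannot take values only in the open upper half-plane on the punctured disk. -/
theorem pole_not_upper_half_plane_valued (h : ℂ → ℂ)
    (hh : DifferentiableOn ℂ h (Metric.ball (0 : ℂ) 1))
    (h0 : h 0 ≠ 0) (m : ℕ) (hm : 1 ≤ m) :
    ∃ w ∈ Metric.ball (0 : ℂ) 1, w ≠ 0 ∧ (h w / w ^ m).im ≤ 0 := by
  have hm0 : (m : ℝ) ≠ 0 := Nat.cast_ne_zero.mpr (by omega)
  set c := h 0 with hc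
  set v : ℂ := Complex.exp ((((Complex.arg c + Real.pi/2)/m : ℝ) : ℂ) * Complex.I) with hv
  have hvne : v ≠ 0 := Complex.exp_ne_zero _
  have hvabs : ‖v‖ = 1 := by
    rw [hv, Complex.norm_exp]
    simp
  have hvm : v ^ m = Complex.exp (((Complex.arg c + Real.pi/2 : ℝ) : ℂ) * Complex.I) := by
    rw [hv, ← Complex.exp_nat_mul]
    congr 1
    push_cast
    have : (m : ℂ) ≠ 0 := by exact_mod_cast hm0
    field_simp
  have hcv : c / v ^ m = -((‖c‖ : ℝ) : ℂ) * Complex.I := by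
    have hC := Complex.norm_mul_exp_arg_mul_I c
    rw [hvm]
    set A := ‖c‖ with hA
    set T := Complex.arg c with hT
    rw [← hC, mul_div_assoc, ← Complex.exp_sub]
    have he : (T : ℂ) * Complex.I - ((T + Real.pi/2 : ℝ) : ℂ) * Complex.I
        = ((-(Real.pi/2) : ℝ) : ℂ) * Complex.I := by push_cast; ring
    rw [he, Complex.exp_mul_I, ← Complex.ofReal_cos, ← Complex.ofReal_sin]
    simp [Real.cos_pi_div_two, Real.sin_pi_div_two]
  have hcabs : 0 < ‖c‖ := by simpa using h0
  have hcont : ContinuousWithinAt h (Metric.ball (0:ℂ) 1) 0 :=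
    hh.continuousOn 0 (by simp)
  rw [Metric.continuousWithinAt_iff] at hcont
  obtain ⟨δ, hδ, hδ'⟩ := hcont ‖c‖ hcabs
  set r : ℝ := min δ 1 / 2 with hr
  have hr0 : 0 < r := by positivity
  have hrδ : r < δ := by
    calc r < min δ 1 := by simpa [hr] using half_lt_self (by positivity : (0:ℝ) < min δ 1)
    _ ≤ δ := min_le_left _ _
  have hr1 : r < 1 := by
    calc r < min δ 1 := by simpa [hr] using half_lt_self (by positivity : (0:ℝ) < min δ 1)
    _ ≤ 1 := min_le_right _ _
  set w : ℂ := (r : ℂ) * v with hw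
  have hwabs : ‖w‖ = r := by
    rw [hw, norm_mul, hvabs, Complex.norm_real, Real.norm_of_nonneg hr0.le, mul_one]
  have hwmem : w ∈ Metric.ball (0:ℂ) 1 := by
    simp [Complex.dist_eq, hwabs, hr1]
  have hwne : w ≠ 0 := by
    rw [hw]
    exact mul_ne_zero (by exact_mod_cast hr0.ne') hvne
  refine ⟨w, hwmem, hwne, ?_⟩
  have hwm0 : w ^ m ≠ 0 := pow_ne_zero _ hwne
  have hsplit : h w / w ^ m = (h w - c) / w ^ m + c / w ^ m := by
    field_simp
    ring
  have hcw : c / w ^ m = ((-‖c‖ / r ^ m : ℝ) : ℂ) * Complex.I := by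
    rw [hw, mul_pow, div_mul_eq_div_div_swap, hcv]
    push_cast
    ring
  have hrm : 0 < r ^ m := pow_pos hr0 m
  have him2 : (c / w ^ m).im = -‖c‖ / r ^ m := by
    rw [hcw]
    simp only [Complex.mul_I_im, Complex.ofReal_re]
  have hnear : ‖h w - c‖ < ‖c‖ := by
    have := hδ' hwmem (by simpa [Complex.dist_eq, hwabs] using hrδ)
    simpa [Complex.dist_eq, hc] using this
  have him1 : ((h w - c) / w ^ m).im ≤ ‖h w - c‖ / r ^ m := by
    calc ((h w - c) / w ^ m).im ≤ ‖(h w - c) / w ^ m‖ := Complex.im_le_norm _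
    _ = ‖h w - c‖ / r ^ m := by
        rw [norm_div, norm_pow, hwabs]
  have : (h w / w ^ m).im ≤ ‖h w - c‖ / r ^ m - ‖c‖ / r ^ m := by
    rw [hsplit, Complex.add_im, him2]
    have h3 := sub_le_sub_right him1 (‖c‖ / r ^ m)
    simp only [neg_div] at *
    linarith
  have hlt : ‖h w - c‖ / r ^ m < ‖c‖ / r ^ m := by
    gcongr
  linarith
end

section
/- Let G be a holomorphic function on the punctured unit disk 𝔻* = {w ∈ ℂ : 0 < |w| < 1} such that Im G(w) > log|w| for all w ∈ 𝔻* (equivalently, Im G(w) + log(1/|w|) > 0). Then G extends holomorphically to the full disk 𝔻 = {w : |w| < 1}; in particular 0 is a removable singularity of G. -/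
open Complex Metric Set Filter Topology

lemma aux_circleInt_deriv_zero {F f : ℂ → ℂ} {R : ℝ} (hR : 0 < R)
    (h : ∀ w ∈ Metric.sphere (0:ℂ) R, HasDerivAt F (f w) w)
    (hc : ContinuousOn f (Metric.sphere (0:ℂ) R)) :
    (∮ z in C(0, R), f z) = 0 := by
  have key : ∀ θ ∈ Set.uIcc (0:ℝ) (2*Real.pi),
      HasDerivAt (fun t => F (circleMap 0 R t))
        (deriv (circleMap 0 R) θ • f (circleMap 0 R θ)) θ := by
    intro θ _
    have h1 := hasDerivAt_circleMap 0 R θ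
    have h2 := (h _ (circleMap_mem_sphere (0:ℂ) hR.le θ)).comp θ h1
    rw [deriv_circleMap, smul_eq_mul, mul_comm]; exact h2
  have hmaps : ∀ θ : ℝ, circleMap 0 R θ ∈ Metric.sphere (0:ℂ) R :=
    fun θ => circleMap_mem_sphere (0:ℂ) hR.le θ
  have hcont : ContinuousOn (fun θ : ℝ => deriv (circleMap 0 R) θ • f (circleMap 0 R θ))
      (Set.uIcc (0:ℝ) (2*Real.pi)) := by
    simp only [deriv_circleMap]
    apply ContinuousOn.fun_smul
    · exact ((continuous_circleMap 0 R).mul continuous_const).continuousOn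
    · exact (hc.comp (continuous_circleMap 0 R).continuousOn (fun θ _ => hmaps θ))
  have hint : IntervalIntegrable (fun θ : ℝ => deriv (circleMap 0 R) θ • f (circleMap 0 R θ)) MeasureTheory.volume 0 (2*Real.pi) := hcont.intervalIntegrable
  have heq := intervalIntegral.integral_eq_sub_of_hasDerivAt key hint
  have hper : circleMap 0 R (2*Real.pi) = circleMap 0 R 0 := by
    simpa using (periodic_circleMap (0:ℂ) R) 0
  calc (∮ z in C(0, R), f z)
      = F (circleMap 0 R (2*Real.pi)) - F (circleMap 0 R 0) := heq
    _ = 0 := by rw [hper, sub_self]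

lemma aux_punctured_preconnected {r : ℝ} :
    IsPreconnected (Metric.ball (0:ℂ) r \ {0}) := by
  have hmap : Continuous (fun p : ℝ × ℝ => (p.1 : ℂ) * Complex.exp (p.2 * Complex.I)) := by
    fun_prop
  have hs : IsPreconnected ((Set.Ioo (0:ℝ) r) ×ˢ (Set.univ : Set ℝ)) :=
    isPreconnected_Ioo.prod isPreconnected_univ
  have himg := hs.image _ hmap.continuousOn
  have heq : (fun p : ℝ × ℝ => (p.1 : ℂ) * Complex.exp (p.2 * Complex.I)) ''
      ((Set.Ioo (0:ℝ) r) ×ˢ (Set.univ : Set ℝ)) = Metric.ball (0:ℂ) r \ {0} := by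
    ext z
    constructor
    · rintro ⟨⟨s, θ⟩, ⟨⟨hs0, hsr⟩, -⟩, rfl⟩
      have habs : ‖(s : ℂ) * Complex.exp (θ * Complex.I)‖ = s := by
        simp [norm_mul, Complex.norm_exp_ofReal_mul_I, abs_of_pos hs0]
      refine ⟨?_, ?_⟩
      · simp only [Metric.mem_ball, Complex.dist_eq, sub_zero, habs]; exact hsr
      · simp only [Set.mem_singleton_iff]
        intro h0
        rw [h0] at habs
        simp only [norm_zero] at habs
        exact absurd habs.symm (ne_of_gt hs0)
    · rintro ⟨hz1, hz2⟩
      have hz0 : z ≠ 0 := hz2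
      refine ⟨⟨‖z‖, Complex.arg z⟩, ⟨⟨?_, ?_⟩, trivial⟩, ?_⟩
      · exact norm_pos_iff.mpr hz0
      · simpa [Complex.dist_eq] using hz1
      · exact Complex.norm_mul_exp_arg_mul_I z
  rwa [heq] at himg

lemma aux_int_subsingleton {T : Set ℝ} (hT : IsPreconnected T)
    (h : ∀ x ∈ T, ∃ n : ℤ, x = n) : T.Subsingleton := by
  intro a ha b hb
  by_contra hab
  obtain ⟨m, rfl⟩ := h a ha
  obtain ⟨k, rfl⟩ := h b hb
  have hmk : m ≠ k := by intro h; exact hab (by rw [h])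
  have hoc := hT.ordConnected
  rcases lt_or_gt_of_ne hmk with hlt | hlt
  · have h1 : ((m:ℝ) + 1/2) ∈ Set.Icc ((m:ℝ)) ((k:ℝ)) := by
      constructor
      · linarith
      · have : (m:ℝ) + 1 ≤ (k:ℝ) := by exact_mod_cast hlt
        linarith
    obtain ⟨j, hj⟩ := h _ (hoc.out ha hb h1)
    have h2 : m < j := by
      have : (m:ℝ) < (j:ℝ) := by rw [← hj]; linarith
      exact_mod_cast this
    have h3 : j < m + 1 := by
      have : (j:ℝ) < (m:ℝ) + 1 := by rw [← hj]; linarith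
      exact_mod_cast this
    omega
  · have h1 : ((k:ℝ) + 1/2) ∈ Set.Icc ((k:ℝ)) ((m:ℝ)) := by
      constructor
      · linarith
      · have : (k:ℝ) + 1 ≤ (m:ℝ) := by exact_mod_cast hlt
        linarith
    obtain ⟨j, hj⟩ := h _ (hoc.out hb ha h1)
    have h2 : k < j := by
      have : (k:ℝ) < (j:ℝ) := by rw [← hj]; linarith
      exact_mod_cast this
    have h3 : j < k + 1 := by
      have : (j:ℝ) < (k:ℝ) + 1 := by rw [← hj]; linarith
      exact_mod_cast this
    omega

/-- A holomorphic function `G` on the punctured unit disk with `Im G(w) > log |w|`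
extends holomorphically across `0`. -/
theorem removable_of_im_gt_log (G : ℂ → ℂ)
    (hG : DifferentiableOn ℂ G {w : ℂ | 0 < ‖w‖ ∧ ‖w‖ < 1})
    (him : ∀ w : ℂ, 0 < ‖w‖ → ‖w‖ < 1 →
      Real.log (‖w‖) < (G w).im) :
    ∃ g : ℂ → ℂ, DifferentiableOn ℂ g (Metric.ball (0 : ℂ) 1) ∧
      ∀ w : ℂ, 0 < ‖w‖ → ‖w‖ < 1 → g w = G w := by
  classical
  have hSeq : {w : ℂ | 0 < ‖w‖ ∧ ‖w‖ < 1} = Metric.ball (0:ℂ) 1 \ {0} := by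
    ext w
    simp only [mem_setOf_eq, mem_diff, Metric.mem_ball, Complex.dist_eq, sub_zero,
      mem_singleton_iff]
    constructor
    · rintro ⟨h1, h2⟩
      refine ⟨h2, fun h0 => by simp [h0] at h1⟩
    · rintro ⟨hb, h0⟩
      exact ⟨norm_pos_iff.mpr h0, hb⟩
  rw [hSeq] at hG
  have hSopen : IsOpen (Metric.ball (0:ℂ) 1 \ {0}) := isOpen_ball.sdiff isClosed_singleton
  have hGat : ∀ w ∈ Metric.ball (0:ℂ) 1 \ {0}, DifferentiableAt ℂ G w :=
    fun w hw => hG.differentiableAt (hSopen.mem_nhds hw)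
  have habsmem : ∀ {w : ℂ}, w ∈ Metric.ball (0:ℂ) 1 \ {0} →
      0 < ‖w‖ ∧ ‖w‖ < 1 := by
    intro w hw
    rw [← hSeq] at hw
    exact hw
  -- the bounded auxiliary function
  set h : ℂ → ℂ := fun w => w * Complex.exp (Complex.I * G w) with hh
  have hdiff_h : DifferentiableOn ℂ h (Metric.ball (0:ℂ) 1 \ {0}) :=
    differentiableOn_id.mul ((hG.const_mul Complex.I).cexp)
  have habs_h : ∀ w ∈ Metric.ball (0:ℂ) 1 \ {0}, ‖h w‖ ≤ 1 := by
    intro w hw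
    obtain ⟨hwpos, hwlt⟩ := habsmem hw
    have him' := him w hwpos hwlt
    have hre : (Complex.I * G w).re = -(G w).im := by simp [Complex.mul_re]
    have habs : ‖h w‖ = ‖w‖ * Real.exp (-(G w).im) := by
      rw [hh]; simp only [norm_mul, Complex.norm_exp, hre]
    rw [habs]
    have h2 : Real.exp (-(G w).im) ≤ Real.exp (-(Real.log ‖w‖)) :=
      Real.exp_le_exp.mpr (by linarith)
    have h3 : Real.exp (-(Real.log ‖w‖)) = ‖w‖⁻¹ := by
      rw [Real.exp_neg, Real.exp_log hwpos]
    calc ‖w‖ * Real.exp (-(G w).im)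
        ≤ ‖w‖ * ‖w‖⁻¹ := by
          rw [← h3]; exact mul_le_mul_of_nonneg_left h2 hwpos.le
      _ = 1 := mul_inv_cancel₀ hwpos.ne'
  have hbdd : BddAbove ((norm ∘ h) '' (Metric.ball (0:ℂ) 1 \ {0})) := by
    refine ⟨1, ?_⟩
    rintro x ⟨w, hw, rfl⟩
    simpa using habs_h w hw
  set H : ℂ → ℂ := Function.update h 0 (limUnder (𝓝[≠] (0:ℂ)) h) with hH
  have HD : DifferentiableOn ℂ H (Metric.ball (0:ℂ) 1) :=
    Complex.differentiableOn_update_limUnder_of_bddAbove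
      (Metric.ball_mem_nhds 0 one_pos) hdiff_h hbdd
  have hHh : ∀ w : ℂ, w ≠ 0 → H w = h w := fun w hw => Function.update_of_ne hw _ _
  have HA : AnalyticAt ℂ H 0 := HD.analyticAt (Metric.ball_mem_nhds 0 one_pos)
  have hne_top : analyticOrderAt H 0 ≠ ⊤ := by
    intro htop
    have hev := analyticOrderAt_eq_top.mp htop
    obtain ⟨ε, hεpos, hball⟩ := Metric.eventually_nhds_iff.mp hev
    set w : ℂ := (((min ε 1) / 2 : ℝ) : ℂ) with hw
    have hwa : ‖w‖ = (min ε 1) / 2 := by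
      rw [hw, Complex.norm_real, Real.norm_eq_abs, abs_of_pos (by positivity)]
    have hw0 : w ≠ 0 := by
      intro h0
      rw [h0] at hwa
      simp at hwa
      have := lt_min hεpos one_pos
      linarith
    have hwd : dist w 0 < ε := by
      rw [Complex.dist_eq, sub_zero, hwa]
      calc (min ε 1)/2 < min ε 1 := by
            have := lt_min hεpos one_pos; linarith
        _ ≤ ε := min_le_left _ _
    have hHw := hball hwd
    rw [hHh w hw0, hh] at hHw
    simp only [mul_eq_zero] at hHw
    rcases hHw with h0 | h0
    · exact hw0 h0
    · exact Complex.exp_ne_zero _ h0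
  obtain ⟨n, hn⟩ := WithTop.ne_top_iff_exists.mp hne_top
  obtain ⟨u, hu_an, hu00, huev⟩ := HA.analyticOrderAt_eq_natCast.mp hn.symm
  have hev_all : ∀ᶠ z in 𝓝 (0:ℂ),
      H z = (z - 0) ^ n • u z ∧ AnalyticAt ℂ u z ∧ u z ≠ 0 :=
    huev.and (hu_an.eventually_analyticAt.and (hu_an.continuousAt.eventually_ne hu00))
  obtain ⟨ε, hεpos, hε⟩ := Metric.eventually_nhds_iff.mp hev_all
  set r : ℝ := min (ε/2) (1/2) with hr
  have hrpos : 0 < r := lt_min (by positivity) (by norm_num)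
  have hrε : r < ε := lt_of_le_of_lt (min_le_left _ _) (by linarith)
  have hr1 : r < 1 := lt_of_le_of_lt (min_le_right _ _) (by norm_num)
  have hmem : ∀ w ∈ Metric.ball (0:ℂ) r,
      H w = w ^ n * u w ∧ AnalyticAt ℂ u w ∧ u w ≠ 0 := by
    intro w hw
    have := hε (lt_trans (Metric.mem_ball.mp hw) hrε)
    simpa [smul_eq_mul] using this
  have hball_sub : Metric.ball (0:ℂ) r \ {0} ⊆ Metric.ball (0:ℂ) 1 \ {0} :=
    diff_subset_diff_left (Metric.ball_subset_ball hr1.le)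
  have hu_annhd : AnalyticOnNhd ℂ u (Metric.ball (0:ℂ) r) := fun w hw => (hmem w hw).2.1
  -- exp (I G) = w ^ (n-1) * u w
  set m : ℤ := (n : ℤ) - 1 with hm
  have hexp_eq : ∀ w ∈ Metric.ball (0:ℂ) r, w ≠ 0 →
      Complex.exp (Complex.I * G w) = w ^ m * u w := by
    intro w hw hw0
    have h1 : H w = w ^ n * u w := (hmem w hw).1
    have h2 : H w = w * Complex.exp (Complex.I * G w) := hHh w hw0
    have h3 : w * Complex.exp (Complex.I * G w) = w * (w ^ m * u w) := by
      rw [← h2, h1]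
      have hnpow : (w : ℂ) ^ n = w * w ^ m := by
        rw [hm, zpow_sub_one₀ hw0 (n:ℤ), ← zpow_natCast w n]
        field_simp
      rw [hnpow]; ring
    exact mul_left_cancel₀ hw0 h3
  -- derivative identity
  have hderiv_id : ∀ w ∈ Metric.ball (0:ℂ) r, w ≠ 0 →
      Complex.I * deriv G w = (m : ℂ) * w⁻¹ + deriv u w / u w := by
    intro w hw hw0
    have hwS : w ∈ Metric.ball (0:ℂ) 1 \ {0} := hball_sub ⟨hw, hw0⟩
    have hu_w : DifferentiableAt ℂ u w := ((hmem w hw).2.1).differentiableAt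
    have hu_ne : u w ≠ 0 := (hmem w hw).2.2
    have hq : HasDerivAt (fun z : ℂ => z ^ m * u z)
        ((m : ℂ) * w ^ (m - 1) * u w + w ^ m * deriv u w) w :=
      (hasDerivAt_zpow m w (Or.inl hw0)).mul hu_w.hasDerivAt
    have hE : HasDerivAt (fun z : ℂ => Complex.exp (Complex.I * G z))
        (Complex.exp (Complex.I * G w) * (Complex.I * deriv G w)) w :=
      ((hGat w hwS).hasDerivAt.const_mul Complex.I).cexp
    have hopen : IsOpen (Metric.ball (0:ℂ) r \ {0}) := isOpen_ball.sdiff isClosed_singleton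
    have hev : (fun z : ℂ => z ^ m * u z) =ᶠ[𝓝 w] (fun z : ℂ => Complex.exp (Complex.I * G z)) := by
      filter_upwards [hopen.mem_nhds ⟨hw, hw0⟩] with z hz
      exact (hexp_eq z hz.1 hz.2).symm
    have heq1 : (m : ℂ) * w ^ (m - 1) * u w + w ^ m * deriv u w
        = Complex.exp (Complex.I * G w) * (Complex.I * deriv G w) :=
      hq.unique (hE.congr_of_eventuallyEq hev)
    rw [hexp_eq w hw hw0] at heq1
    have hwm : (w : ℂ) ^ m ≠ 0 := zpow_ne_zero _ hw0
    have hzz : (w : ℂ) ^ (m - 1) = w ^ m * w⁻¹ := zpow_sub_one₀ hw0 m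
    rw [hzz] at heq1
    have key2 : (Complex.I * deriv G w) * (w ^ m * u w)
        = ((m : ℂ) * w⁻¹ + deriv u w / u w) * (w ^ m * u w) := by
      rw [mul_comm (Complex.I * deriv G w) (w ^ m * u w), ← heq1]
      field_simp
    exact mul_right_cancel₀ (mul_ne_zero hwm hu_ne) key2
  -- circle integration
  set ρ : ℝ := r / 2 with hρ
  have hρpos : 0 < ρ := by positivity
  have hsph : ∀ z ∈ Metric.sphere (0:ℂ) ρ, ‖z‖ = ρ := by
    intro z hz
    simpa [Complex.dist_eq] using hz
  have hsph_sub : ∀ z ∈ Metric.sphere (0:ℂ) ρ, z ∈ Metric.ball (0:ℂ) r ∧ z ≠ 0 := by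
    intro z hz
    have ha := hsph z hz
    constructor
    · rw [Metric.mem_ball, Complex.dist_eq, sub_zero, ha]; linarith
    · intro h0; rw [h0] at ha; simp at ha; linarith
  have hGana : AnalyticOnNhd ℂ (deriv G) (Metric.ball (0:ℂ) 1 \ {0}) :=
    (hG.analyticOnNhd hSopen).deriv
  have hA : (∮ z in C(0, ρ), Complex.I * deriv G z) = 0 := by
    apply aux_circleInt_deriv_zero hρpos
    · intro w hw
      obtain ⟨hw1, hw2⟩ := hsph_sub w hw
      exact (hGat w (hball_sub ⟨hw1, hw2⟩)).hasDerivAt.const_mul Complex.I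
    · apply (continuousOn_const.mul hGana.continuousOn).mono
      intro z hz
      exact hball_sub (hsph_sub z hz)
  have hA2 : (∮ z in C(0, ρ), Complex.I * deriv G z)
      = ∮ z in C(0, ρ), ((m : ℂ) * z⁻¹ + deriv u z / u z) := by
    apply circleIntegral.integral_congr hρpos.le
    intro z hz
    obtain ⟨hz1, hz2⟩ := hsph_sub z hz
    exact hderiv_id z hz1 hz2
  have hu_dana : AnalyticOnNhd ℂ (deriv u) (Metric.ball (0:ℂ) r) := hu_annhd.deriv
  have hclosed_sub : Metric.closedBall (0:ℂ) ρ ⊆ Metric.ball (0:ℂ) r := by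
    apply Metric.closedBall_subset_ball; rw [hρ]; linarith
  have hv_cont : ContinuousOn (fun z => deriv u z / u z) (Metric.closedBall (0:ℂ) ρ) := by
    apply ContinuousOn.div
    · exact (hu_dana.continuousOn).mono hclosed_sub
    · exact (hu_annhd.continuousOn).mono hclosed_sub
    · intro z hz; exact (hmem z (hclosed_sub hz)).2.2
  have hv0 : (∮ z in C(0, ρ), deriv u z / u z) = 0 := by
    apply Complex.circleIntegral_eq_zero_of_differentiable_on_off_countable hρpos.le
      countable_empty hv_cont
    intro z hz
    have hz' : z ∈ Metric.ball (0:ℂ) r := hclosed_sub (Metric.ball_subset_closedBall hz.1)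
    exact ((hu_dana z hz').differentiableAt).div ((hu_annhd z hz').differentiableAt)
      ((hmem z hz').2.2)
  have ha_cont : ContinuousOn (fun z : ℂ => (m : ℂ) * z⁻¹) (Metric.sphere (0:ℂ) ρ) := by
    apply continuousOn_const.mul
    apply ContinuousOn.inv₀ continuousOn_id
    intro z hz
    exact (hsph_sub z hz).2
  have ha_int : CircleIntegrable (fun z : ℂ => (m : ℂ) * z⁻¹) 0 ρ :=
    ha_cont.circleIntegrable hρpos.le
  have hsum_int : CircleIntegrable (fun z : ℂ => (m : ℂ) * z⁻¹ + deriv u z / u z) 0 ρ := by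
    apply ContinuousOn.circleIntegrable hρpos.le
    exact ha_cont.add (hv_cont.mono (Metric.sphere_subset_closedBall))
  have ha_val : (∮ z in C(0, ρ), (m : ℂ) * z⁻¹) = (m : ℂ) * (2 * Real.pi * Complex.I) := by
    have h1 : (∮ z in C(0, ρ), (m : ℂ) * z⁻¹) = (m : ℂ) • ∮ z in C(0, ρ), z⁻¹ := by
      rw [← circleIntegral.integral_smul]
      simp [smul_eq_mul]
    rw [h1]
    have h2 : (∮ z in C(0, ρ), z⁻¹) = 2 * Real.pi * Complex.I := by
      have := circleIntegral.integral_sub_inv_of_mem_ball (Metric.mem_ball_self hρpos (x := (0:ℂ)))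
      simpa using this
    rw [h2, smul_eq_mul]
  have hm0 : m = 0 := by
    have hsplit : (∮ z in C(0, ρ), deriv u z / u z)
        = (∮ z in C(0, ρ), ((m : ℂ) * z⁻¹ + deriv u z / u z)) - ∮ z in C(0, ρ), (m : ℂ) * z⁻¹ := by
      rw [← circleIntegral.integral_sub hsum_int ha_int]
      apply circleIntegral.integral_congr hρpos.le
      intro z hz
      ring
    rw [hv0, ← hA2, hA, ha_val, zero_sub] at hsplit
    have hzero : (m : ℂ) * (2 * Real.pi * Complex.I) = 0 := neg_eq_zero.mp hsplit.symm
    have h2π : (2 * (Real.pi : ℂ) * Complex.I) ≠ 0 := by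
      simp [Real.pi_ne_zero, Complex.I_ne_zero]
    have : (m : ℂ) = 0 := by
      rcases mul_eq_zero.mp hzero with h | h
      · exact h
      · exact absurd h h2π
    exact_mod_cast this
  -- now exp (I G w) = u w near 0
  have hn1 : ∀ w ∈ Metric.ball (0:ℂ) r, w ≠ 0 →
      Complex.exp (Complex.I * G w) = u w := by
    intro w hw hw0
    have := hexp_eq w hw hw0
    rw [hm0] at this
    simpa using this
  -- choose a smaller radius where u w / u 0 is close to 1
  have hucont0 : ContinuousAt u 0 := ((hmem 0 (Metric.mem_ball_self hrpos)).2.1).continuousAt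
  have hu0ne : u 0 ≠ 0 := (hmem 0 (Metric.mem_ball_self hrpos)).2.2
  have htt : Filter.Tendsto (fun w => u w / u 0 - 1) (𝓝 (0:ℂ)) (𝓝 0) := by
    have h1 : Filter.Tendsto (fun w => u w / u 0) (𝓝 (0:ℂ)) (𝓝 (u 0 / u 0)) :=
      (hucont0.div_const (u 0)).tendsto
    rw [div_self hu0ne] at h1
    simpa using h1.sub_const 1
  have hev2 : ∀ᶠ w in 𝓝 (0:ℂ), ‖u w / u 0 - 1‖ < 1 := by
    have := htt (Metric.ball_mem_nhds 0 one_pos)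
    filter_upwards [this] with w hw
    simpa [Complex.dist_eq] using hw
  obtain ⟨r₂', hr₂'pos, hball2⟩ := Metric.eventually_nhds_iff.mp hev2
  set r₂ : ℝ := min r₂' r with hr₂
  have hr₂pos : 0 < r₂ := lt_min hr₂'pos hrpos
  have hr₂r : r₂ ≤ r := min_le_right _ _
  have hball_r₂ : Metric.ball (0:ℂ) r₂ ⊆ Metric.ball (0:ℂ) r := Metric.ball_subset_ball hr₂r
  have hclose : ∀ w ∈ Metric.ball (0:ℂ) r₂, ‖u w / u 0 - 1‖ < 1 := by
    intro w hw
    apply hball2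
    calc dist w 0 < r₂ := Metric.mem_ball.mp hw
      _ ≤ r₂' := min_le_left _ _
  set L : ℂ → ℂ := fun w => Complex.log (u w / u 0) + Complex.log (u 0) with hL
  have hslit : ∀ w ∈ Metric.ball (0:ℂ) r₂, u w / u 0 ∈ Complex.slitPlane := by
    intro w hw
    have h1 := Complex.mem_slitPlane_of_norm_lt_one (hclose w hw)
    simpa using h1
  have hLdiff : ∀ w ∈ Metric.ball (0:ℂ) r₂, DifferentiableAt ℂ L w := by
    intro w hw
    have hu_w : DifferentiableAt ℂ u w := ((hmem w (hball_r₂ hw)).2.1).differentiableAt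
    exact ((hu_w.div_const (u 0)).clog (hslit w hw)).add_const _
  have hLexp : ∀ w ∈ Metric.ball (0:ℂ) r₂, Complex.exp (L w) = u w := by
    intro w hw
    have hu_ne' : u w ≠ 0 := (hmem w (hball_r₂ hw)).2.2
    rw [hL]
    rw [Complex.exp_add, Complex.exp_log (div_ne_zero hu_ne' hu0ne), Complex.exp_log hu0ne,
      div_mul_cancel₀ _ hu0ne]
  -- integer-valued function
  set φ : ℂ → ℝ := fun w => ((Complex.I * G w - L w) / (2 * Real.pi * Complex.I)).re with hφ
  have h2π : (2 * (Real.pi : ℂ) * Complex.I) ≠ 0 := by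
    simp [Real.pi_ne_zero, Complex.I_ne_zero]
  have hφ_int : ∀ w ∈ Metric.ball (0:ℂ) r₂ \ {0},
      ∃ j : ℤ, φ w = j ∧ Complex.I * G w = L w + j * (2 * Real.pi * Complex.I) := by
    rintro w ⟨hw, hw0⟩
    have hw0' : w ≠ 0 := hw0
    have h1 : Complex.exp (Complex.I * G w) = Complex.exp (L w) := by
      rw [hn1 w (hball_r₂ hw) hw0', hLexp w hw]
    obtain ⟨j, hj⟩ := Complex.exp_eq_exp_iff_exists_int.mp h1
    refine ⟨j, ?_, hj⟩
    have hq : (Complex.I * G w - L w) / (2 * Real.pi * Complex.I) = (j : ℂ) := by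
      rw [hj]; field_simp; ring
    rw [hφ]
    simp only [hq, Complex.intCast_re]
  -- continuity of φ
  have hr₂1 : r₂ < 1 := lt_of_le_of_lt hr₂r hr1
  have hs₂S : Metric.ball (0:ℂ) r₂ \ {0} ⊆ Metric.ball (0:ℂ) 1 \ {0} :=
    diff_subset_diff_left (Metric.ball_subset_ball hr₂1.le)
  have hφcont : ContinuousOn φ (Metric.ball (0:ℂ) r₂ \ {0}) := by
    apply Complex.continuous_re.comp_continuousOn
    apply ContinuousOn.div_const
    apply ContinuousOn.sub
    · exact continuousOn_const.mul ((hG.continuousOn).mono hs₂S)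
    · intro w hw
      exact ((hLdiff w hw.1).continuousAt).continuousWithinAt
  have hsub := aux_int_subsingleton
    ((aux_punctured_preconnected (r := r₂)).image φ hφcont)
    (by rintro x ⟨w, hw, rfl⟩
        obtain ⟨j, hj, -⟩ := hφ_int w hw
        exact ⟨j, hj⟩)
  set w₀ : ℂ := ((r₂ / 2 : ℝ) : ℂ) with hw₀def
  have hw₀ : w₀ ∈ Metric.ball (0:ℂ) r₂ \ {0} := by
    constructor
    · rw [Metric.mem_ball, Complex.dist_eq, sub_zero, hw₀def, Complex.norm_real, Real.norm_eq_abs,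
        abs_of_pos (by positivity)]
      linarith
    · simp only [mem_singleton_iff, hw₀def]
      intro h0
      have : (r₂ / 2 : ℝ) = 0 := by exact_mod_cast h0
      linarith
  obtain ⟨c, hc, hcid⟩ := hφ_int w₀ hw₀
  have hconst : ∀ w ∈ Metric.ball (0:ℂ) r₂ \ {0},
      Complex.I * G w = L w + c * (2 * Real.pi * Complex.I) := by
    intro w hw
    obtain ⟨j, hj, hjid⟩ := hφ_int w hw
    have hφeq : φ w = φ w₀ := hsub (mem_image_of_mem _ hw) (mem_image_of_mem _ hw₀)
    have hjc : (j : ℝ) = (c : ℝ) := by rw [← hj, ← hc, hφeq]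
    have : j = c := by exact_mod_cast hjc
    rwa [this] at hjid
  -- define the extension
  set g : ℂ → ℂ :=
    Function.update G 0 (-Complex.I * (L 0 + c * (2 * Real.pi * Complex.I))) with hg
  have hval : ∀ w ∈ Metric.ball (0:ℂ) r₂ \ {0},
      G w = -Complex.I * (L w + c * (2 * Real.pi * Complex.I)) := by
    intro w hw
    have h1 := hconst w hw
    have h2 : -Complex.I * (Complex.I * G w) = G w := by
      rw [← mul_assoc, neg_mul, Complex.I_mul_I, neg_neg, one_mul]
    rw [← h2, h1]
  refine ⟨g, ?_, ?_⟩
  · intro w hw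
    by_cases hw0 : w = 0
    · subst hw0
      have hev : g =ᶠ[𝓝 (0:ℂ)]
          (fun w => -Complex.I * (L w + c * (2 * Real.pi * Complex.I))) := by
        filter_upwards [Metric.ball_mem_nhds (0:ℂ) hr₂pos] with z hz
        by_cases hz0 : z = 0
        · subst hz0
          rw [hg]
          simp [Function.update_self]
        · rw [hg, Function.update_of_ne hz0, hval z ⟨hz, hz0⟩]
      have hdR : DifferentiableAt ℂ
          (fun w => -Complex.I * (L w + c * (2 * Real.pi * Complex.I))) 0 :=
        (((hLdiff 0 (Metric.mem_ball_self hr₂pos)).add_const _).const_mul _)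
      exact (hdR.congr_of_eventuallyEq hev).differentiableWithinAt
    · have hGat' : DifferentiableAt ℂ G w := hGat w ⟨hw, hw0⟩
      have hev : g =ᶠ[𝓝 w] G := by
        filter_upwards [isOpen_compl_singleton.mem_nhds (by simpa using hw0 :
          w ∈ ({0}ᶜ : Set ℂ))] with z hz
        exact Function.update_of_ne hz _ _
      exact (hGat'.congr_of_eventuallyEq hev).differentiableWithinAt
  · intro w hpos _
    have hw0 : w ≠ 0 := by
      intro h0
      rw [h0] at hpos
      simp at hpos
    exact Function.update_of_ne hw0 _ _
end

section
/- Let f be a holomorphic function from the upper half-plane ℍ = {z ∈ ℂ : Im z > 0} into itself satisfying f(z + 2π) = f(z) + 2π for all z ∈ ℍ. Then there exists a holomorphic function G on the full unit disk 𝔻 = {w ∈ ℂ : |w| < 1} such that f(z) = z + G(e^{iz}) for all z ∈ ℍ. -/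
open Complex Filter Function Set Asymptotics
open scoped Real Topology
noncomputable section
local notation "I∞" => Filter.comap Complex.im Filter.atTop

lemma qParam_two_pi (z : ℂ) :
    Function.Periodic.qParam (2 * Real.pi) z = Complex.exp (Complex.I * z) := by
  unfold Function.Periodic.qParam
  congr 1
  have hπ : (Real.pi : ℂ) ≠ 0 := by exact_mod_cast Real.pi_ne_zero
  push_cast
  field_simp

lemma im_invQParam_pos' {q : ℂ} (hq : q ≠ 0) (hq1 : ‖q‖ < 1) :
    0 < (Function.Periodic.invQParam (2 * Real.pi) q).im := by
  rw [Function.Periodic.im_invQParam]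
  have h1 : Real.log (‖q‖) < 0 := Real.log_neg (norm_pos_iff.mpr hq) hq1
  have h2 : -(2 * Real.pi) / (2 * Real.pi) = -1 := by
    rw [neg_div, div_self (by positivity : (2:ℝ) * Real.pi ≠ 0)]
  rw [h2]; nlinarith

lemma eventually_im_pos' : ∀ᶠ z : ℂ in I∞, 0 < z.im := by
  refine Filter.eventually_comap.mpr ?_
  filter_upwards [Filter.eventually_ge_atTop 1] with b hb a ha
  rw [ha]; linarith

lemma eventually_im_gt' (M : ℝ) : ∀ᶠ z : ℂ in I∞, M < z.im := by
  refine Filter.eventually_comap.mpr ?_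
  filter_upwards [Filter.eventually_gt_atTop M] with b hb a ha
  rw [ha]; exact hb

lemma const_of_exp_eq_one {S : Set ℂ} (hS : IsPreconnected S) {δ : ℂ → ℂ}
    (hc : ContinuousOn δ S) (hd : ∀ z ∈ S, Complex.exp (δ z) = 1)
    {a b : ℂ} (ha : a ∈ S) (hb : b ∈ S) : δ a = δ b := by
  have key : ∀ z ∈ S, ∃ n : ℤ, δ z = n * (2 * Real.pi * Complex.I) := fun z hz =>
    Complex.exp_eq_one_iff.mp (hd z hz)
  set ν : ℂ → ℝ := fun z => (δ z / (2 * Real.pi * Complex.I)).re with hν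
  have hcν : ContinuousOn ν S := Complex.continuous_re.comp_continuousOn (hc.div_const _)
  have hval : ∀ z ∈ S, ∃ n : ℤ, ν z = n := by
    intro z hz
    obtain ⟨n, hn⟩ := key z hz
    refine ⟨n, ?_⟩
    rw [hν]
    simp only [hn]
    rw [mul_div_assoc, div_self (by simp [Real.pi_ne_zero, Complex.ext_iff] :
      (2 * (Real.pi:ℂ) * Complex.I) ≠ 0)]
    simp
  have hab : ν a = ν b := by
    by_contra hne
    obtain ⟨na, hna⟩ := hval a ha
    obtain ⟨nb, hnb⟩ := hval b hb
    wlog hlt : ν a < ν b generalizing a b na nb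
    · exact this hb ha (Ne.symm hne) nb hnb na hna
        (lt_of_le_of_ne (not_lt.mp hlt) (Ne.symm hne))
    have hint : na < nb := by exact_mod_cast hna ▸ hnb ▸ hlt
    have hmid : (na : ℝ) + 1/2 ∈ Set.Icc (ν a) (ν b) := by
      constructor
      · rw [hna]; linarith
      · rw [hnb]
        have : (na : ℝ) + 1 ≤ nb := by exact_mod_cast hint
        linarith
    obtain ⟨x, hx, hxval⟩ := hS.intermediate_value ha hb hcν hmid
    obtain ⟨n, hn⟩ := hval x hx
    rw [hn] at hxval
    have h2 : (2:ℝ) * n = 2 * na + 1 := by linarith [hxval]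
    have h3 : (2 * n : ℤ) = 2 * na + 1 := by exact_mod_cast h2
    omega
  obtain ⟨na', hna'⟩ := key a ha
  obtain ⟨nb', hnb'⟩ := key b hb
  have hνa : ν a = na' := by
    rw [hν]; simp only [hna']
    rw [mul_div_assoc, div_self (by simp [Real.pi_ne_zero, Complex.ext_iff] :
      (2 * (Real.pi:ℂ) * Complex.I) ≠ 0)]
    simp
  have hνb : ν b = nb' := by
    rw [hν]; simp only [hnb']
    rw [mul_div_assoc, div_self (by simp [Real.pi_ne_zero, Complex.ext_iff] :
      (2 * (Real.pi:ℂ) * Complex.I) ≠ 0)]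
    simp
  have h4 : (na' : ℝ) = nb' := by rw [← hνa, ← hνb, hab]
  have h5 : na' = nb' := by exact_mod_cast h4
  rw [hna', hnb', h5]

lemma periodic_ext {F : ℂ → ℂ} (hF : ∀ z : ℂ, 0 < z.im → F (z + 2 * Real.pi) = F z) :
    Function.Periodic (fun z : ℂ => if 0 < z.im then F z else 0) ((2 * Real.pi : ℝ) : ℂ) := by
  intro z
  have him : (z + ((2 * Real.pi : ℝ) : ℂ)).im = z.im := by simp
  show (if 0 < (z + ((2 * Real.pi : ℝ) : ℂ)).im then F (z + ((2 * Real.pi : ℝ) : ℂ)) else 0)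
      = (if 0 < z.im then F z else 0)
  rw [him]
  by_cases hz : 0 < z.im
  · rw [if_pos hz, if_pos hz]
    have := hF z hz
    rw [← this]
    norm_num
  · rw [if_neg hz, if_neg hz]

lemma cusp_diffOn {φ : ℂ → ℂ} (hper : Function.Periodic φ ((2 * Real.pi : ℝ) : ℂ))
    (hdiff : ∀ z : ℂ, 0 < z.im → DifferentiableAt ℂ φ z)
    (hbd : Asymptotics.IsBigO I∞ φ (1 : ℂ → ℝ)) :
    DifferentiableOn ℂ (Function.Periodic.cuspFunction (2 * Real.pi) φ) (Metric.ball 0 1) := by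
  have hπ : (0:ℝ) < 2 * Real.pi := by positivity
  intro q hq
  rw [Metric.mem_ball, dist_zero_right] at hq
  by_cases hq0 : q = 0
  · subst hq0
    refine (Function.Periodic.differentiableAt_cuspFunction_zero hπ hper ?_
      hbd).differentiableWithinAt
    filter_upwards [eventually_im_pos'] with z hz using hdiff z hz
  · have hz : 0 < (Function.Periodic.invQParam (2 * Real.pi) q).im :=
      im_invQParam_pos' hq0 (by exact hq)
    have h2 := Function.Periodic.differentiableAt_cuspFunction hπ.ne' hper (hdiff _ hz)
    rw [Function.Periodic.qParam_right_inv hπ.ne' hq0] at h2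
    exact h2.differentiableWithinAt

/-- A holomorphic self-map `f` of the upper half-plane with `f(z + 2π) = f(z) + 2π` equals
`z` plus a function holomorphic across the puncture, in the covering coordinate `w = e^{iz}`. -/
theorem parabolic_developing_map_structure (f : ℂ → ℂ)
    (hf : DifferentiableOn ℂ f {z : ℂ | 0 < z.im})
    (hmaps : ∀ z : ℂ, 0 < z.im → 0 < (f z).im)
    (hper : ∀ z : ℂ, 0 < z.im → f (z + 2 * Real.pi) = f z + 2 * Real.pi) :
    ∃ G : ℂ → ℂ, DifferentiableOn ℂ G (Metric.ball (0 : ℂ) 1) ∧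
      ∀ z : ℂ, 0 < z.im → f z = z + G (Complex.exp (Complex.I * z)) := by
  have hπ : (0:ℝ) < 2 * Real.pi := by positivity
  have hopen : IsOpen {z : ℂ | 0 < z.im} := isOpen_lt continuous_const Complex.continuous_im
  have hdf : ∀ z : ℂ, 0 < z.im → DifferentiableAt ℂ f z := fun z hz =>
    hf.differentiableAt (hopen.mem_nhds hz)
  have hexp2pi : Complex.exp (Complex.I * (2 * Real.pi)) = 1 := by
    rw [show Complex.I * (2 * (Real.pi:ℂ)) = 2 * Real.pi * Complex.I by ring,
      Complex.exp_two_pi_mul_I]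
  -- Step 1: the bounded periodic function exp (I f z)
  set φ : ℂ → ℂ := fun z => if 0 < z.im then Complex.exp (Complex.I * f z) else 0 with hφdef
  have hφper : Function.Periodic φ ((2 * Real.pi : ℝ) : ℂ) := by
    apply periodic_ext
    intro z hz
    rw [hper z hz, mul_add, Complex.exp_add, hexp2pi, mul_one]
  have hφdiff : ∀ z : ℂ, 0 < z.im → DifferentiableAt ℂ φ z := by
    intro z hz
    have h1 : DifferentiableAt ℂ (fun w => Complex.exp (Complex.I * f w)) z :=
      ((hdf z hz).const_mul Complex.I).cexp
    apply h1.congr_of_eventuallyEq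
    filter_upwards [hopen.mem_nhds hz] with w hw
    exact if_pos hw
  have hφbd : Asymptotics.IsBigO I∞ φ (1 : ℂ → ℝ) := by
    apply Asymptotics.isBigO_of_le
    intro z
    simp only [Pi.one_apply, norm_one]
    by_cases hz : 0 < z.im
    · have : φ z = Complex.exp (Complex.I * f z) := if_pos hz
      rw [this, Complex.norm_exp]
      have hre : (Complex.I * f z).re = -(f z).im := by simp
      rw [hre]
      exact Real.exp_le_one_iff.mpr (by linarith [hmaps z hz])
    · have : φ z = 0 := if_neg hz
      rw [this]; simp
  set Φ := Function.Periodic.cuspFunction (2 * Real.pi) φ with hΦdef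
  have hΦdiff : DifferentiableOn ℂ Φ (Metric.ball 0 1) := cusp_diffOn hφper hφdiff hφbd
  have heq : ∀ z : ℂ, 0 < z.im → Φ (Complex.exp (Complex.I * z)) =
      Complex.exp (Complex.I * f z) := by
    intro z hz
    have h1 := Function.Periodic.eq_cuspFunction hπ.ne' hφper z
    rw [qParam_two_pi] at h1
    exact h1.trans (if_pos hz)
  have hΦne : ∀ q : ℂ, q ≠ 0 → ‖q‖ < 1 → Φ q ≠ 0 := by
    intro q hq0 hq1
    rw [hΦdef, Function.Periodic.cuspFunction_eq_of_nonzero _ _ hq0]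
    have him := im_invQParam_pos' hq0 hq1
    simp only [hφdef, if_pos him]
    exact Complex.exp_ne_zero _
  have hΦ0 : AnalyticAt ℂ Φ 0 :=
    hΦdiff.analyticAt ((Metric.isOpen_ball).mem_nhds (by simp))
  -- Step 2: order and local factorization
  have hnetop : analyticOrderAt Φ 0 ≠ ⊤ := by
    intro htop
    have hev := analyticOrderAt_eq_top.mp htop
    obtain ⟨ε, hε, hball⟩ := Metric.eventually_nhds_iff.mp hev
    set r : ℝ := min (ε / 2) (1 / 2) with hr
    have hrpos : 0 < r := by positivity
    have h1 : ‖(r : ℂ)‖ = r := by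
      rw [Complex.norm_real, Real.norm_eq_abs, abs_of_pos hrpos]
    refine hΦne (r : ℂ) (by exact_mod_cast hrpos.ne') (by rw [h1]; calc
        r ≤ 1/2 := min_le_right _ _
        _ < 1 := by norm_num) ?_
    apply hball
    rw [dist_zero_right, h1]
    calc r ≤ ε / 2 := min_le_left _ _
      _ < ε := by linarith
  obtain ⟨k, hk⟩ : ∃ k : ℕ, analyticOrderAt Φ 0 = k := ⟨(analyticOrderAt Φ 0).toNat, (ENat.coe_toNat hnetop).symm⟩
  obtain ⟨g, hg, hg0, hfac⟩ := (hΦ0.analyticOrderAt_eq_natCast).mp hk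
  set w₀ := g 0 with hw₀def
  -- Step 3: gather the eventual facts at 0 and extract a radius ε
  have hg_ev : ∀ᶠ q in 𝓝 (0:ℂ), AnalyticAt ℂ g q := hg.eventually_analyticAt
  have hg_cont : ∀ᶠ q in 𝓝 (0:ℂ), dist (g q) w₀ < ‖w₀‖ / 2 := by
    have hpos : 0 < ‖w₀‖ / 2 := by
      have := norm_pos_iff.mpr hg0; linarith
    exact hg.continuousAt (Metric.ball_mem_nhds _ hpos)
  obtain ⟨ε, hε, hev⟩ := Metric.eventually_nhds_iff.mp ((hfac.and hg_ev).and hg_cont)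
  have hw₀ : w₀ ≠ 0 := hg0
  -- Step 4: the strip S, and the branch function δ
  set M : ℝ := max 0 (-Real.log ε) with hMdef
  have hM0 : 0 ≤ M := le_max_left _ _
  have hqsmall : ∀ z : ℂ, M < z.im → dist (Complex.exp (Complex.I * z)) 0 < ε := by
    intro z hz
    rw [dist_zero_right, Complex.norm_exp]
    have hre : (Complex.I * z).re = -z.im := by simp
    rw [hre]
    have h1 : -Real.log ε < z.im := lt_of_le_of_lt (le_max_right _ _) hz
    calc Real.exp (-z.im) < Real.exp (Real.log ε) := Real.exp_lt_exp.mpr (by linarith)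
      _ = ε := Real.exp_log hε
  set S : Set ℂ := {z : ℂ | M < z.im} with hSdef
  have hSconn : IsPreconnected S := (convex_halfSpace_im_gt M).isPreconnected
  have hSsub : ∀ z ∈ S, 0 < z.im := fun z hz => lt_of_le_of_lt hM0 hz
  have hratio : ∀ w : ℂ, dist w w₀ < ‖w₀‖ / 2 → ‖w / w₀ - 1‖ < 1/2 := by
    intro w hw
    have h1 : w / w₀ - 1 = (w - w₀) / w₀ := by field_simp
    rw [h1, norm_div, div_lt_iff₀ (norm_pos_iff.mpr hw₀)]
    rw [Complex.dist_eq] at hw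
    calc ‖w - w₀‖ < ‖w₀‖ / 2 := hw
      _ = 1/2 * ‖w₀‖ := by ring
  have hslit' : ∀ u : ℂ, ‖u - 1‖ ≤ 1/2 → u ∈ Complex.slitPlane := by
    intro u hu
    rw [Complex.mem_slitPlane_iff]
    left
    have h1 : |(u - 1).re| ≤ ‖u - 1‖ := Complex.abs_re_le_norm _
    have h2 : u.re = 1 + (u - 1).re := by simp
    rw [h2]
    have h3 := abs_le.mp (le_trans h1 hu)
    linarith [h3.1]
  have hgne : ∀ z ∈ S, g (Complex.exp (Complex.I * z)) ≠ 0 := by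
    intro z hz h0
    have h1 := (hev (hqsmall z hz)).2
    rw [h0, dist_comm, dist_zero_right] at h1
    linarith [norm_pos_iff.mpr hw₀]
  set δ : ℂ → ℂ := fun z => Complex.I * f z - Complex.I * (k : ℂ) * z - Complex.log w₀ -
      Complex.log (g (Complex.exp (Complex.I * z)) / w₀) with hδdef
  have hδone : ∀ z ∈ S, Complex.exp (δ z) = 1 := by
    intro z hz
    have hzim : 0 < z.im := hSsub z hz
    have hq0 : Complex.exp (Complex.I * z) ≠ 0 := Complex.exp_ne_zero _
    have hΦq : Complex.exp (Complex.I * f z) =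
        Complex.exp (Complex.I * z) ^ k * g (Complex.exp (Complex.I * z)) := by
      have h1 := (hev (hqsmall z hz)).1.1
      rw [sub_zero, smul_eq_mul] at h1
      rw [← heq z hzim]; exact h1
    have hqk : Complex.exp (Complex.I * (k : ℂ) * z) = Complex.exp (Complex.I * z) ^ k := by
      rw [show Complex.I * (k : ℂ) * z = (k : ℕ) * (Complex.I * z) by push_cast; ring,
        Complex.exp_nat_mul]
    have hgq : g (Complex.exp (Complex.I * z)) ≠ 0 := hgne z hz
    have hqk0 : Complex.exp (Complex.I * z) ^ k ≠ 0 := pow_ne_zero _ hq0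
    show Complex.exp (Complex.I * f z - Complex.I * (k : ℂ) * z - Complex.log w₀ -
      Complex.log (g (Complex.exp (Complex.I * z)) / w₀)) = 1
    rw [Complex.exp_sub, Complex.exp_sub, Complex.exp_sub, hqk, Complex.exp_log hw₀,
      Complex.exp_log (div_ne_zero hgq hw₀), hΦq]
    field_simp
  have hδcont : ContinuousOn δ S := by
    intro z hz
    apply ContinuousAt.continuousWithinAt
    have hzim := hSsub z hz
    have c1 : ContinuousAt (fun w : ℂ => Complex.exp (Complex.I * w)) z :=
      (Complex.continuous_exp.comp (continuous_const.mul continuous_id)).continuousAt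
    have hq := hqsmall z hz
    have c2 : ContinuousAt g (Complex.exp (Complex.I * z)) := ((hev hq).1.2).continuousAt
    have c3' : ContinuousAt (fun w : ℂ => g (Complex.exp (Complex.I * w))) z :=
      ContinuousAt.comp c2 c1
    have c3 : ContinuousAt (fun w : ℂ => g (Complex.exp (Complex.I * w)) / w₀) z :=
      c3'.div_const _
    have hsl : g (Complex.exp (Complex.I * z)) / w₀ ∈ Complex.slitPlane :=
      hslit' _ (le_of_lt (hratio _ (hev hq).2))
    have c4 : ContinuousAt (fun w : ℂ =>
        Complex.log (g (Complex.exp (Complex.I * w)) / w₀)) z :=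
      ContinuousAt.comp (g := Complex.log)
        (f := fun w : ℂ => g (Complex.exp (Complex.I * w)) / w₀) (x := z)
        (continuousAt_clog hsl) c3
    have c5 : ContinuousAt f z := (hdf z hzim).continuousAt
    exact (((continuousAt_const.mul c5).sub (continuousAt_const.mul continuousAt_id)).sub
      continuousAt_const).sub c4
  -- Step 5: k = 1
  set z₀ : ℂ := ((M + 1 : ℝ) : ℂ) * Complex.I with hz₀def
  have him0 : z₀.im = M + 1 := by simp [hz₀def]
  have hz₀S : z₀ ∈ S := by
    show M < z₀.im
    rw [him0]; linarith
  have hz₀S' : z₀ + 2 * Real.pi ∈ S := by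
    show M < (z₀ + 2 * (Real.pi : ℂ)).im
    simp [him0]
  have hz₀im : 0 < z₀.im := hSsub z₀ hz₀S
  have hexpsame : Complex.exp (Complex.I * (z₀ + 2 * Real.pi)) =
      Complex.exp (Complex.I * z₀) := by
    rw [mul_add, Complex.exp_add, hexp2pi, mul_one]
  have hkc : (k : ℂ) = 1 := by
    have h1 : δ z₀ = δ (z₀ + 2 * Real.pi) := const_of_exp_eq_one hSconn hδcont hδone hz₀S hz₀S'
    simp only [hδdef] at h1
    rw [hper z₀ hz₀im, hexpsame] at h1
    have h2 : Complex.I * (2 * Real.pi) * (1 - (k : ℂ)) = 0 := by linear_combination -h1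
    have hI2π : (Complex.I * (2 * Real.pi) : ℂ) ≠ 0 := by
      apply mul_ne_zero Complex.I_ne_zero
      exact_mod_cast mul_ne_zero two_ne_zero (Complex.ofReal_ne_zero.mpr Real.pi_ne_zero)
    have h3 := (mul_eq_zero.mp h2).resolve_left hI2π
    linear_combination -h3
  have hk1 : k = 1 := by exact_mod_cast hkc
  -- Step 6: boundedness of f z - z on S
  obtain ⟨C, hC⟩ : ∃ C : ℝ, ∀ w ∈ Metric.closedBall (1:ℂ) (1/2), ‖Complex.log w‖ ≤ C := by
    apply (isCompact_closedBall _ _).exists_bound_of_continuousOn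
    intro w hw
    rw [Metric.mem_closedBall, Complex.dist_eq] at hw
    exact (continuousAt_clog (hslit' w hw)).continuousWithinAt
  set c : ℂ := δ z₀ with hcdef
  have hbound : ∀ z ∈ S, ‖f z - z‖ ≤ ‖c‖ + ‖Complex.log w₀‖ + C := by
    intro z hz
    have h1 : δ z = c := const_of_exp_eq_one hSconn hδcont hδone hz hz₀S
    have hrho : g (Complex.exp (Complex.I * z)) / w₀ ∈ Metric.closedBall (1:ℂ) (1/2) := by
      rw [Metric.mem_closedBall, Complex.dist_eq]
      exact le_of_lt (hratio _ (hev (hqsmall z hz)).2)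
    have h2 : Complex.I * (f z - z) = c + Complex.log w₀ +
        Complex.log (g (Complex.exp (Complex.I * z)) / w₀) := by
      simp only [hδdef] at h1
      rw [hk1] at h1
      push_cast at h1
      linear_combination h1
    have h3 : ‖f z - z‖ = ‖Complex.I * (f z - z)‖ := by
      rw [norm_mul, Complex.norm_I, one_mul]
    rw [h3, h2]
    calc ‖c + Complex.log w₀ + Complex.log (g (Complex.exp (Complex.I * z)) / w₀)‖
        ≤ ‖c + Complex.log w₀‖ + ‖Complex.log (g (Complex.exp (Complex.I * z)) / w₀)‖ :=
          norm_add_le _ _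
      _ ≤ (‖c‖ + ‖Complex.log w₀‖) + C := add_le_add (norm_add_le _ _) (hC _ hrho)
  -- Step 7: conclusion via the cusp function of f z - z
  set ψ : ℂ → ℂ := fun z => if 0 < z.im then f z - z else 0 with hψdef
  have hψper : Function.Periodic ψ ((2 * Real.pi : ℝ) : ℂ) :=
    periodic_ext (F := fun z => f z - z) (fun z hz => by
      show f (z + 2 * Real.pi) - (z + 2 * Real.pi) = f z - z
      rw [hper z hz]; ring)
  have hψdiff : ∀ z : ℂ, 0 < z.im → DifferentiableAt ℂ ψ z := by
    intro z hz
    have h1 : DifferentiableAt ℂ (fun w => f w - w) z := (hdf z hz).sub differentiableAt_id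
    apply h1.congr_of_eventuallyEq
    filter_upwards [hopen.mem_nhds hz] with w hw
    exact if_pos hw
  have hψbd : Asymptotics.IsBigO I∞ ψ (1 : ℂ → ℝ) := by
    rw [Asymptotics.isBigO_iff]
    refine ⟨‖c‖ + ‖Complex.log w₀‖ + C, ?_⟩
    filter_upwards [eventually_im_gt' M] with z hz
    have hzim : 0 < z.im := hSsub z hz
    simp only [hψdef, if_pos hzim, Pi.one_apply, norm_one, mul_one]
    exact hbound z hz
  refine ⟨Function.Periodic.cuspFunction (2 * Real.pi) ψ, cusp_diffOn hψper hψdiff hψbd, ?_⟩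
  intro z hz
  have h1 := Function.Periodic.eq_cuspFunction hπ.ne' hψper z
  rw [qParam_two_pi] at h1
  rw [h1, hψdef]
  simp only [if_pos hz]
  ring
end
end

section
/- Let 0 < α < 1 and let f be a holomorphic function from the upper half-plane ℍ = {z ∈ ℂ : Im z > 0} into the unit disk 𝔻 = {w ∈ ℂ : |w| < 1} satisfying f(z + 2π) = e^{2πiα}·f(z) for all z ∈ ℍ. Then there exists a holomorphic function G on the full unit disk 𝔻 such that f(z) = e^{iαz}·G(e^{iz}) for all z ∈ ℍ. -/
open Complex Filter

/-- A holomorphic map `f` from the upper half-plane into the unit disk with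
`f(z + 2π) = e^{2πiα} f(z)`, `0 < α < 1`, factors as `f(z) = e^{iαz} G(e^{iz})` with `G`
holomorphic on the full unit disk. -/
theorem elliptic_developing_map_structure (α : ℝ) (hα0 : 0 < α) (hα1 : α < 1) (f : ℂ → ℂ)
    (hf : DifferentiableOn ℂ f {z : ℂ | 0 < z.im})
    (hmaps : ∀ z : ℂ, 0 < z.im → ‖f z‖ < 1)
    (hper : ∀ z : ℂ, 0 < z.im →
      f (z + 2 * Real.pi) = Complex.exp (2 * Real.pi * Complex.I * α) * f z) :
    ∃ G : ℂ → ℂ, DifferentiableOn ℂ G (Metric.ball (0 : ℂ) 1) ∧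
      ∀ z : ℂ, 0 < z.im →
        f z = Complex.exp (Complex.I * α * z) * G (Complex.exp (Complex.I * z)) := by
  set h : ℂ → ℂ := fun z => Complex.exp (-(Complex.I * α * z)) * f z with hh
  have hopen : IsOpen {z : ℂ | 0 < z.im} := isOpen_lt continuous_const Complex.continuous_im
  -- h is 2π-periodic on ℍ
  have hH : ∀ z : ℂ, 0 < z.im → h (z + 2 * Real.pi) = h z := by
    intro z hz
    have e1 : Complex.exp (-(Complex.I * α * (z + 2 * Real.pi))) *
        Complex.exp (2 * Real.pi * Complex.I * α) = Complex.exp (-(Complex.I * α * z)) := by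
      rw [← Complex.exp_add]; congr 1; ring
    simp only [hh, hper z hz, ← mul_assoc, e1]
  have hHn : ∀ n : ℤ, ∀ z : ℂ, 0 < z.im → h (z + n * (2 * Real.pi)) = h z := by
    intro n
    induction n using Int.induction_on with
    | zero => intro z hz; simp
    | succ k ih =>
        intro z hz
        have : (((k : ℤ) + 1 : ℤ) : ℂ) * (2 * Real.pi) = (k : ℤ) * (2 * Real.pi) + 2 * Real.pi := by
          push_cast; ring
        rw [this, ← add_assoc, hH _ (by simpa using hz), ih z hz]
    | pred k ih =>
        intro z hz
        have him : (0:ℝ) < (z + (-(k:ℤ) - 1) * (2 * Real.pi)).im := by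
          simpa using hz
        have := hH (z + ((-(k:ℤ) - 1 : ℤ) : ℂ) * (2 * Real.pi)) (by push_cast at him ⊢; simpa using him)
        have e2 : z + ((-(k:ℤ) - 1 : ℤ) : ℂ) * (2 * Real.pi) + 2 * Real.pi
            = z + ((-(k:ℤ) : ℤ) : ℂ) * (2 * Real.pi) := by push_cast; ring
        rw [e2] at this
        have e3 : ((-(k:ℤ) - 1 : ℤ) : ℂ) = ((-(k:ℤ)+(-1) : ℤ) : ℂ) := by push_cast; ring
        rw [e3] at this ⊢
        rw [← this, ih z hz]
  -- key: h z₁ = h z₂ when e^{iz₁} = e^{iz₂}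
  have hkey : ∀ z₁ z₂ : ℂ, 0 < z₁.im → 0 < z₂.im →
      Complex.exp (Complex.I * z₁) = Complex.exp (Complex.I * z₂) → h z₁ = h z₂ := by
    intro z₁ z₂ h₁ h₂ he
    obtain ⟨n, hn⟩ := Complex.exp_eq_exp_iff_exists_int.1 he
    have hz : z₁ = z₂ + n * (2 * Real.pi) := by
      have : Complex.I * z₁ = Complex.I * (z₂ + n * (2 * Real.pi)) := by
        rw [hn]; ring
      exact mul_left_cancel₀ Complex.I_ne_zero this
    rw [hz, hHn n z₂ h₂]
  -- h is differentiable on ℍ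
  have hhd : DifferentiableOn ℂ h {z : ℂ | 0 < z.im} := by
    apply DifferentiableOn.mul _ hf
    exact (Complex.differentiable_exp.comp (by fun_prop)).differentiableOn
  set L : ℂ → ℂ := fun w => -Complex.I * Complex.log w with hL
  have himL : ∀ w : ℂ, w ≠ 0 → ‖w‖ < 1 → 0 < (L w).im := by
    intro w hw0 hw1
    have : (L w).im = -Real.log (‖w‖) := by
      simp [hL, Complex.log_im, Complex.log_re]
    rw [this]
    have := Real.log_neg (norm_pos_iff.mpr hw0) hw1
    linarith
  have hexpL : ∀ w : ℂ, w ≠ 0 → Complex.exp (Complex.I * L w) = w := by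
    intro w hw0
    have : Complex.I * L w = Complex.log w := by
      simp only [hL]; rw [← mul_assoc]; simp [Complex.I_mul_I]
    rw [this, Complex.exp_log hw0]
  set g : ℂ → ℂ := fun w => h (L w) with hg
  set A : ℂ → ℂ := fun w => h (-Complex.I * Complex.log (-w) + Real.pi) with hA
  -- im of alt argument
  have himA : ∀ w : ℂ, w ≠ 0 → ‖w‖ < 1 →
      0 < (-Complex.I * Complex.log (-w) + Real.pi : ℂ).im := by
    intro w hw0 hw1
    have h1 : (-Complex.I * Complex.log (-w) + Real.pi : ℂ).im
        = -Real.log (‖-w‖) := by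
      simp [Complex.log_im, Complex.log_re]
    rw [h1, norm_neg]
    have := Real.log_neg (norm_pos_iff.mpr hw0) hw1
    linarith
  have hexpA : ∀ w : ℂ, w ≠ 0 →
      Complex.exp (Complex.I * (-Complex.I * Complex.log (-w) + Real.pi)) = w := by
    intro w hw0
    have e1 : Complex.I * (-Complex.I * Complex.log (-w) + Real.pi)
        = Complex.log (-w) + Real.pi * Complex.I := by
      rw [mul_add, ← mul_assoc]; simp [Complex.I_mul_I]; ring
    rw [e1, Complex.exp_add, Complex.exp_log (neg_ne_zero.2 hw0), Complex.exp_pi_mul_I]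
    ring
  -- g = A on the punctured disk
  have hgA : ∀ w ∈ Metric.ball (0:ℂ) 1 \ {0}, g w = A w := by
    rintro w ⟨hw1, hw0⟩
    rw [Metric.mem_ball, dist_zero_right] at hw1
    rw [Set.mem_singleton_iff] at hw0
    exact hkey _ _ (himL w hw0 hw1) (himA w hw0 hw1)
      (by rw [hexpL w hw0, hexpA w hw0])
  -- g is differentiable on the punctured disk
  have hgd : DifferentiableOn ℂ g (Metric.ball (0:ℂ) 1 \ {0}) := by
    intro w hw
    obtain ⟨hw1', hw0'⟩ := hw
    rw [Metric.mem_ball, dist_zero_right] at hw1'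
    rw [Set.mem_singleton_iff] at hw0'
    apply DifferentiableAt.differentiableWithinAt
    by_cases hs : w ∈ Complex.slitPlane
    · have hd1 : DifferentiableAt ℂ L w :=
        (Complex.differentiableAt_log hs).const_mul _
      have hd2 : DifferentiableAt ℂ h (L w) :=
        hhd.differentiableAt (hopen.mem_nhds (himL w hw0' hw1'))
      exact hd2.comp w hd1
    · -- w is on the negative real axis; use A instead
      have hsneg : -w ∈ Complex.slitPlane := by
        rw [Complex.mem_slitPlane_iff] at hs ⊢
        push_neg at hs
        rcases lt_or_eq_of_le hs.1 with h | h
        · exact Or.inl (by simp only [Complex.neg_re]; linarith)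
        · exact absurd (Complex.ext (by simpa using h) (by simpa using hs.2)) hw0'
      have hd1 : DifferentiableAt ℂ (fun w => -Complex.I * Complex.log (-w) + (Real.pi : ℂ)) w := by
        apply DifferentiableAt.add_const
        exact (((Complex.differentiableAt_log hsneg).comp w (by fun_prop)).const_mul _)
      have hd2 : DifferentiableAt ℂ h (-Complex.I * Complex.log (-w) + Real.pi) :=
        hhd.differentiableAt (hopen.mem_nhds (himA w hw0' hw1'))
      have hdA : DifferentiableAt ℂ A w := by have := hd2.comp w hd1; exact this
      apply hdA.congr_of_eventuallyEq
      have hmem : Metric.ball (0:ℂ) 1 \ {0} ∈ nhds w := by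
        apply IsOpen.mem_nhds (Metric.isOpen_ball.sdiff isClosed_singleton)
        exact ⟨by rwa [Metric.mem_ball, dist_zero_right], hw0'⟩
      exact Filter.eventuallyEq_of_mem hmem hgA
  -- bound |g w| ≤ |w|^{-α}
  have hbound : ∀ w : ℂ, w ≠ 0 → ‖w‖ < 1 →
      ‖g w‖ ≤ (‖w‖) ^ (-α : ℝ) := by
    intro w hw0 hw1
    have him := himL w hw0 hw1
    have hfb : ‖f (L w)‖ ≤ 1 := le_of_lt (hmaps _ him)
    have hre : (-(Complex.I * α * L w)).re = α * (L w).im := by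
      simp [Complex.mul_re, Complex.mul_im]
    have h1 : ‖g w‖ ≤ Real.exp (α * (L w).im) := by
      simp only [hg, hh, norm_mul]
      calc ‖Complex.exp (-(Complex.I * α * L w))‖ * ‖f (L w)‖
          ≤ ‖Complex.exp (-(Complex.I * α * L w))‖ * 1 := by
            apply mul_le_mul_of_nonneg_left hfb (norm_nonneg _)
        _ = Real.exp (α * (L w).im) := by rw [mul_one, Complex.norm_exp, hre]
    have h2 : (L w).im = -Real.log (‖w‖) := by
      simp [hL, Complex.log_im, Complex.log_re]
    rw [h2] at h1
    rwa [Real.rpow_def_of_pos (norm_pos_iff.mpr hw0), show Real.log (‖w‖) * (-α)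
      = α * -Real.log (‖w‖) by ring]
  -- little-o condition at 0
  have ho : (fun w => g w - g 0) =o[nhdsWithin (0:ℂ) {(0:ℂ)}ᶜ] fun w => (w - 0)⁻¹ := by
    simp only [sub_zero]
    rw [Asymptotics.isLittleO_iff_tendsto]
    · have hnorm : Tendsto (fun w : ℂ => (‖w‖) ^ ((1:ℝ) - α)
          + ‖g 0‖ * ‖w‖ + ‖w‖ ^ ((1:ℝ)-α) * 0)
          (nhdsWithin (0:ℂ) {(0:ℂ)}ᶜ) (nhds 0) := by
        have habs : Tendsto (fun w : ℂ => ‖w‖) (nhdsWithin (0:ℂ) {(0:ℂ)}ᶜ)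
            (nhds 0) := by
          have : Tendsto (fun w : ℂ => ‖w‖) (nhds (0:ℂ)) (nhds 0) := by
            simpa using (continuous_norm.tendsto (0:ℂ))
          exact this.mono_left nhdsWithin_le_nhds
        have hrpow : Tendsto (fun w : ℂ => (‖w‖) ^ ((1:ℝ) - α))
            (nhdsWithin (0:ℂ) {(0:ℂ)}ᶜ) (nhds 0) := by
          have hc : ContinuousAt (fun x : ℝ => x ^ ((1:ℝ) - α)) 0 :=
            Real.continuousAt_rpow_const 0 _ (Or.inr (by linarith))
          have := hc.tendsto.comp habs
          simpa [Function.comp_def, Real.zero_rpow (show (1:ℝ) - α ≠ 0 by linarith)] using this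
        have h2 : Tendsto (fun w : ℂ => ‖g 0‖ * ‖w‖)
            (nhdsWithin (0:ℂ) {(0:ℂ)}ᶜ) (nhds 0) := by
          simpa using habs.const_mul (‖g 0‖)
        simpa using hrpow.add h2
      apply squeeze_zero_norm' _ hnorm
      have hev : ∀ᶠ w in nhdsWithin (0:ℂ) {(0:ℂ)}ᶜ, w ≠ 0 ∧ ‖w‖ < 1 := by
        filter_upwards [self_mem_nhdsWithin,
          eventually_nhdsWithin_of_eventually_nhds
            (Metric.eventually_nhds_iff_ball.2 ⟨1, one_pos, fun y hy => by
              rwa [Metric.mem_ball, dist_zero_right] at hy⟩)] with w hw hw'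
        exact ⟨hw, hw'⟩
      filter_upwards [hev] with w hw
      obtain ⟨hw0, hw1⟩ := hw
      have hb := hbound w hw0 hw1
      have habs0 : (0:ℝ) < ‖w‖ := norm_pos_iff.mpr hw0
      have e1 : ‖w‖ ^ (-α : ℝ) * ‖w‖ = ‖w‖ ^ ((1:ℝ) - α) := by
        rw [← Real.rpow_add_one (ne_of_gt habs0)]
        congr 1; ring
      have : ‖(g w - g 0) / w⁻¹‖ = ‖g w - g 0‖ * ‖w‖ := by
        rw [div_eq_mul_inv, inv_inv]
        simp [norm_mul]
      rw [this]
      calc ‖g w - g 0‖ * ‖w‖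
          ≤ (‖g w‖ + ‖g 0‖) * ‖w‖ := by
            apply mul_le_mul_of_nonneg_right _ (norm_nonneg _)
            exact (norm_sub_le _ _).trans (le_refl _)
        _ ≤ (‖w‖ ^ (-α : ℝ) + ‖g 0‖) * ‖w‖ := by
            apply mul_le_mul_of_nonneg_right _ (norm_nonneg _)
            linarith
        _ = ‖w‖ ^ ((1:ℝ) - α) + ‖g 0‖ * ‖w‖ := by
            rw [add_mul, e1]
        _ ≤ ‖w‖ ^ ((1:ℝ) - α) + ‖g 0‖ * ‖w‖
            + ‖w‖ ^ ((1:ℝ)-α) * 0 := by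
            simp
    · intro x hx
      have : x = 0 := by
        by_contra hx0
        exact hx0 (by simpa [inv_eq_zero] using hx)
      simp [this]
  -- remove the singularity
  refine ⟨Function.update g 0 (limUnder (nhdsWithin (0:ℂ) {(0:ℂ)}ᶜ) g), ?_, ?_⟩
  · exact Complex.differentiableOn_update_limUnder_of_isLittleO
      (Metric.ball_mem_nhds 0 one_pos) hgd ho
  · intro z hz
    have hwz0 : Complex.exp (Complex.I * z) ≠ 0 := Complex.exp_ne_zero _
    rw [Function.update_of_ne hwz0]
    have habs : ‖Complex.exp (Complex.I * z)‖ = Real.exp (-z.im) := by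
      rw [Complex.norm_exp]; congr 1; simp [Complex.mul_re]
    have hw1 : ‖Complex.exp (Complex.I * z)‖ < 1 := by
      rw [habs]; exact Real.exp_lt_one_iff.2 (by linarith)
    have hgz : g (Complex.exp (Complex.I * z)) = h z := by
      apply hkey _ _ (himL _ hwz0 hw1) hz
      rw [hexpL _ hwz0]
    rw [hgz]
    simp only [hh, ← mul_assoc, ← Complex.exp_add]
    rw [show Complex.I * ↑α * z + -(Complex.I * ↑α * z) = 0 by ring, Complex.exp_zero, one_mul]
end
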